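/- arXiv:1706.00669 — 6 statements merged into one kernel-verified Lean document; each statement's English description precedes it below -/
import Mathlib

section
/- The Bernstein operator B_n of order n has eigenvalues λ_{k,n} = n!/((n−k)! n^k) for k = 0, …, n, and these satisfy 1 = λ_{0,n} = λ_{1,n} > λ_{2,n} > ⋯ > λ_{n,n} = n!/n^n; in particular the second largest eigenvalue is λ_{2,n} = (n−1)/n. -/
noncomputable section

/-- The Bernstein operator of order `n`:
`B_n f (x) = ∑_{k=0}^n f(k/n) C(n,k) x^k (1-x)^{n-k}`. -/
def bernsteinOp (n : ℕ) (f : ℝ → ℝ) (x : ℝ) : ℝ :=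
  ∑ k ∈ Finset.range (n + 1), f ((k : ℝ) / n) * (n.choose k : ℝ) * x ^ k * (1 - x) ^ (n - k)

/-- The numbers `λ_{k,n} = n! / ((n-k)! n^k)`. -/
def bernsteinEigenvalue (n k : ℕ) : ℝ :=
  (n.factorial : ℝ) / ((n - k).factorial * (n : ℝ) ^ k)

open Polynomial Finset

lemma prod_cast_desc (k j : ℕ) :
    ∏ i ∈ Finset.range j, ((k:ℝ) - (i:ℝ)) = (k.descFactorial j : ℝ) := by
  induction j with
  | zero => simp
  | succ j ih =>
    rw [Finset.prod_range_succ, ih]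
    rcases Nat.lt_or_ge k (j+1) with h | h
    · rw [show k.descFactorial (j+1) = 0 from Nat.descFactorial_eq_zero_iff_lt.mpr h]
      rcases Nat.lt_or_ge k j with h2 | h2
      · rw [show k.descFactorial j = 0 from Nat.descFactorial_eq_zero_iff_lt.mpr h2]
        simp
      · have : k = j := by omega
        subst this
        simp
    ·
      rw [Nat.descFactorial_succ]
      have : ((k - j : ℕ) : ℝ) = (k:ℝ) - (j:ℝ) := by
        push_cast [Nat.cast_sub (by omega : j ≤ k)]; ring
      push_cast
      rw [← this]
      push_cast
      ring

lemma keyid (n j k : ℕ) (hj : j ≤ k) (hk : k ≤ n) :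
    (k.descFactorial j : ℝ) * (n.choose k : ℝ) =
      (n.descFactorial j : ℝ) * ((n-j).choose (k-j) : ℝ) := by
  have e1 : ((k-j).factorial : ℝ) * (k.descFactorial j : ℝ) = (k.factorial : ℝ) := by
    exact_mod_cast congrArg (Nat.cast (R := ℝ)) (Nat.factorial_mul_descFactorial hj)
  have e2 : ((n-j).factorial : ℝ) * (n.descFactorial j : ℝ) = (n.factorial : ℝ) := by
    exact_mod_cast congrArg (Nat.cast (R := ℝ)) (Nat.factorial_mul_descFactorial (hj.trans hk))
  have hsub : (n - j) - (k - j) = n - k := by omega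
  rw [Nat.cast_choose ℝ hk, Nat.cast_choose ℝ (by omega : k - j ≤ n - j), hsub]
  have f1 : ((k-j).factorial : ℝ) ≠ 0 := by exact_mod_cast (k-j).factorial_ne_zero
  have f2 : ((n-j).factorial : ℝ) ≠ 0 := by exact_mod_cast (n-j).factorial_ne_zero
  have f3 : ((n-k).factorial : ℝ) ≠ 0 := by exact_mod_cast (n-k).factorial_ne_zero
  have f4 : ((k).factorial : ℝ) ≠ 0 := by exact_mod_cast (k).factorial_ne_zero
  field_simp
  linear_combination (n.factorial : ℝ) * e1 - (k.factorial : ℝ) * e2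

lemma lam0 (n : ℕ) : bernsteinEigenvalue n 0 = 1 := by
  simp [bernsteinEigenvalue, Nat.factorial_ne_zero]

lemma lam1 (n : ℕ) (h : 1 ≤ n) : bernsteinEigenvalue n 1 = 1 := by
  have h1 : n * (n-1).factorial = n.factorial := Nat.mul_factorial_pred (by omega)
  have hn : (n:ℝ) ≠ 0 := Nat.cast_ne_zero.mpr (by omega)
  rw [bernsteinEigenvalue]
  rw [div_eq_one_iff_eq (by positivity)]
  push_cast [← h1]
  ring

lemma lam2 (n : ℕ) (h : 2 ≤ n) : bernsteinEigenvalue n 2 = ((n:ℝ) - 1) / n := by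
  have h1 : n * (n-1).factorial = n.factorial := Nat.mul_factorial_pred (by omega)
  have h2 : (n-1) * (n-2).factorial = (n-1).factorial := by
    have := Nat.mul_factorial_pred (n := n - 1) (by omega)
    simpa [show n - 1 - 1 = n - 2 by omega] using this
  have hn : (0:ℝ) < (n:ℝ) := by exact_mod_cast (by omega : 0 < n)
  rw [bernsteinEigenvalue, div_eq_div_iff (mul_pos (by exact_mod_cast (n-2).factorial_pos : (0:ℝ) < ((n-2).factorial:ℝ)) (pow_pos hn 2)).ne' hn.ne']
  push_cast [← h1, ← h2, Nat.cast_sub (by omega : 1 ≤ n)]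
  ring

lemma lamn (n : ℕ) : bernsteinEigenvalue n n = (n.factorial : ℝ) / (n:ℝ)^n := by
  simp [bernsteinEigenvalue]

lemma lam_step (n : ℕ) (k : ℕ) (h1 : 1 ≤ k) (h2 : k < n) :
    bernsteinEigenvalue n (k+1) < bernsteinEigenvalue n k := by
  have hfac : (n - k) * (n - (k+1)).factorial = (n-k).factorial := by
    have := Nat.mul_factorial_pred (n := n - k) (by omega)
    simpa [show n - k - 1 = n - (k+1) by omega] using this
  have hn : (0:ℝ) < (n:ℝ) := by exact_mod_cast (by omega : 0 < n)
  have hlt : ((n - k : ℕ) : ℝ) < (n:ℝ) := by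
    have : (n - k : ℕ) < n := by omega
    exact_mod_cast this
  rw [bernsteinEigenvalue, bernsteinEigenvalue]
  apply div_lt_div_of_pos_left
  · exact_mod_cast Nat.factorial_pos n
  · exact mul_pos (by exact_mod_cast (n-k).factorial_pos) (pow_pos hn k)
  · have e : ((n-k).factorial : ℝ) = (n-k : ℕ) * ((n - (k+1)).factorial : ℝ) := by
      exact_mod_cast hfac.symm
    rw [e, pow_succ]
    have hp : (0:ℝ) < ((n - (k+1)).factorial : ℝ) * (n:ℝ)^k := by positivity
    calc ((n-k:ℕ):ℝ) * ((n - (k+1)).factorial : ℝ) * (n:ℝ)^k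
        = ((n-k:ℕ):ℝ) * (((n - (k+1)).factorial : ℝ) * (n:ℝ)^k) := by ring
      _ < (n:ℝ) * (((n - (k+1)).factorial : ℝ) * (n:ℝ)^k) := by
          exact mul_lt_mul_of_pos_right hlt hp
      _ = ((n - (k+1)).factorial : ℝ) * ((n:ℝ)^k * n) := by ring

lemma lam_mono (n : ℕ) : ∀ j k, 1 ≤ j → j < k → k ≤ n →
    bernsteinEigenvalue n k < bernsteinEigenvalue n j := by
  intro j k hj hjk hk
  induction k with
  | zero => omega
  | succ m ih =>
    rcases Nat.lt_or_ge j m with h | h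
    · exact lt_trans (lam_step n m (by omega) (by omega)) (ih (by omega) (by omega))
    · have : j = m := by omega
      subst this
      exact lam_step n j hj (by omega)

def Bop (n : ℕ) (p : Polynomial ℝ) : Polynomial ℝ :=
  ∑ k ∈ Finset.range (n + 1),
    Polynomial.C (p.eval ((k : ℝ) / n) * (n.choose k : ℝ)) * X ^ k * (1 - X) ^ (n - k)

def Qp (n j : ℕ) : Polynomial ℝ := ∏ i ∈ Finset.range j, (X - Polynomial.C ((i:ℝ) / n))

lemma Bop_eval (n : ℕ) (p : Polynomial ℝ) (x : ℝ) :
    (Bop n p).eval x = bernsteinOp n (fun y => p.eval y) x := by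
  rw [Bop, eval_finset_sum, bernsteinOp]
  refine Finset.sum_congr rfl fun k _ => ?_
  simp only [eval_mul, eval_pow, eval_C, eval_X, eval_sub, eval_one]
  try ring

lemma Bop_add (n : ℕ) (p q : Polynomial ℝ) : Bop n (p + q) = Bop n p + Bop n q := by
  rw [Bop, Bop, Bop, ← Finset.sum_add_distrib]
  refine Finset.sum_congr rfl fun k _ => ?_
  simp only [eval_add, add_mul, C_add]
  try ring

lemma Bop_smul (n : ℕ) (a : ℝ) (p : Polynomial ℝ) : Bop n (a • p) = a • Bop n p := by
  rw [Bop, Bop, Finset.smul_sum]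
  refine Finset.sum_congr rfl fun k _ => ?_
  simp only [smul_eq_C_mul, eval_mul, eval_C, C_mul]
  try ring

lemma Bop_sub (n : ℕ) (p q : Polynomial ℝ) : Bop n (p - q) = Bop n p - Bop n q := by
  have := Bop_add n q (p - q)
  simp at this
  rw [this]; ring

lemma Qp_monic (n j : ℕ) : (Qp n j).Monic :=
  monic_prod_of_monic _ _ fun i _ => monic_X_sub_C _

lemma Qp_natDegree (n j : ℕ) : (Qp n j).natDegree = j := by
  rw [Qp, natDegree_prod _ _ fun i _ => (monic_X_sub_C _).ne_zero]
  simp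

lemma Qp_degree (n j : ℕ) : (Qp n j).degree = j := by
  rw [degree_eq_natDegree (Qp_monic n j).ne_zero, Qp_natDegree]

lemma Qp_eval (n j k : ℕ) (hn : (n:ℝ) ≠ 0) :
    (Qp n j).eval ((k:ℝ)/n) = (k.descFactorial j : ℝ) / (n:ℝ)^j := by
  rw [Qp, eval_prod]
  have : ∀ i ∈ Finset.range j, ((k:ℝ)/n - (i:ℝ)/n) = ((k:ℝ) - i) / n := fun i _ => by ring
  calc ∏ i ∈ Finset.range j, eval ((k:ℝ)/n) (X - C ((i:ℝ)/n))
      = ∏ i ∈ Finset.range j, (((k:ℝ) - i) / n) := by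
        refine Finset.prod_congr rfl fun i hi => ?_
        simp only [eval_sub, eval_X, eval_C]
        exact this i hi
    _ = (∏ i ∈ Finset.range j, ((k:ℝ) - i)) / (n:ℝ)^j := by
        rw [Finset.prod_div_distrib, Finset.prod_const, Finset.card_range]
    _ = (k.descFactorial j : ℝ) / (n:ℝ)^j := by rw [prod_cast_desc]

lemma lam_desc (n j : ℕ) (hj : j ≤ n) (hn0 : (n:ℝ) ≠ 0) :
    bernsteinEigenvalue n j = (n.descFactorial j : ℝ) / (n:ℝ)^j := by
  have e2 : ((n-j).factorial : ℝ) * (n.descFactorial j : ℝ) = (n.factorial : ℝ) := by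
    exact_mod_cast congrArg (Nat.cast (R := ℝ)) (Nat.factorial_mul_descFactorial hj)
  have f2 : ((n-j).factorial : ℝ) ≠ 0 := by exact_mod_cast (n-j).factorial_ne_zero
  rw [bernsteinEigenvalue, div_eq_div_iff (by positivity) (pow_ne_zero j hn0)]
  linear_combination (-(n:ℝ)^j) * e2

lemma Bop_Qp (n j : ℕ) (hj : j ≤ n) (hn0 : (n:ℝ) ≠ 0) :
    Bop n (Qp n j) = bernsteinEigenvalue n j • (X : Polynomial ℝ)^j := by
  have hQe : ∀ k : ℕ, (Qp n j).eval ((k:ℝ)/n) = (k.descFactorial j : ℝ)/(n:ℝ)^j :=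
    fun k => Qp_eval n j k hn0
  rw [Bop]
  rw [← Finset.sum_range_add_sum_Ico _ (show j ≤ n+1 by omega)]
  have h0 : ∑ k ∈ Finset.range j,
      (C ((Qp n j).eval ((k:ℝ)/n) * (n.choose k:ℝ)) * X^k * (1-X)^(n-k)) = 0 := by
    refine Finset.sum_eq_zero fun k hk => ?_
    rw [hQe k, show k.descFactorial j = 0 from
      Nat.descFactorial_eq_zero_iff_lt.mpr (Finset.mem_range.mp hk)]
    simp
  rw [h0, zero_add, Finset.sum_Ico_eq_sum_range,
    show n + 1 - j = (n - j) + 1 from by omega]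
  have hb : ∑ m ∈ Finset.range ((n-j)+1),
      C (((n-j).choose m : ℝ)) * X^m * (1-X)^((n-j)-m) = 1 := by
    have h := add_pow (X : Polynomial ℝ) (1 - X) (n - j)
    simp only [add_sub_cancel, one_pow] at h
    rw [show (∑ m ∈ Finset.range ((n-j)+1), C (((n-j).choose m : ℝ)) * X^m * (1-X)^((n-j)-m))
        = ∑ m ∈ Finset.range ((n-j)+1), X^m * (1-X)^((n-j)-m) * (((n-j).choose m : ℕ) : Polynomial ℝ)
      from Finset.sum_congr rfl fun m _ => by rw [C_eq_natCast]; ring, ← h]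
  calc ∑ m ∈ Finset.range ((n-j)+1),
        (C ((Qp n j).eval (((j+m:ℕ):ℝ)/n) * (n.choose (j+m):ℝ)) * X^(j+m) * (1-X)^(n-(j+m)))
      = ∑ m ∈ Finset.range ((n-j)+1), (C (bernsteinEigenvalue n j) * X^j) *
          (C (((n-j).choose m : ℝ)) * X^m * (1-X)^((n-j)-m)) := by
        refine Finset.sum_congr rfl fun m hm => ?_
        have hm' : m ≤ n - j := by
          have := Finset.mem_range.mp hm; omega
        have kk := keyid n j (j+m) (Nat.le_add_right j m) (by omega)
        rw [show (j+m)-j = m from by omega] at kk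
        have hc : (Qp n j).eval (((j+m:ℕ):ℝ)/n) * (n.choose (j+m):ℝ) =
            bernsteinEigenvalue n j * (((n-j).choose m : ℝ)) := by
          rw [hQe (j+m), lam_desc n j hj hn0, div_mul_eq_mul_div, div_mul_eq_mul_div, kk]
        rw [hc, C_mul, pow_add, show n - (j+m) = (n-j) - m from by omega]
        ring
    _ = bernsteinEigenvalue n j • (X : Polynomial ℝ)^j := by
        rw [← Finset.mul_sum, hb, mul_one, smul_eq_C_mul]

lemma deg_step (p : Polynomial ℝ) (m : ℕ) (h : p.degree ≤ ((m+1 : ℕ) : WithBot ℕ))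
    (h2 : p.coeff (m+1) = 0) : p.degree ≤ (m : ℕ) := by
  rw [Polynomial.degree_le_iff_coeff_zero] at h ⊢
  intro i hi
  have hm : m < i := by exact_mod_cast hi
  rcases Nat.lt_or_ge (m+1) i with h3 | h3
  · exact h i (by exact_mod_cast h3)
  · have : i = m+1 := by omega
    subst this; exact h2

lemma QpCoeffTop (n m : ℕ) : (Qp n m).coeff m = 1 := by
  have := (Qp_monic n m).coeff_natDegree
  rwa [Qp_natDegree] at this

lemma Bop_one (n : ℕ) (hn0 : (n:ℝ) ≠ 0) : Bop n 1 = 1 := by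
  have := Bop_Qp n 0 (by omega) hn0
  simpa [Qp, lam0] using this

lemma Bop_X (n : ℕ) (hn : 1 ≤ n) (hn0 : (n:ℝ) ≠ 0) : Bop n X = X := by
  have := Bop_Qp n 1 hn hn0
  simpa [Qp, lam1 n hn] using this

lemma Bop_deg (n : ℕ) (hn0 : (n:ℝ) ≠ 0) : ∀ m, m ≤ n → ∀ p : Polynomial ℝ,
    p.degree ≤ (m:ℕ) →
    (Bop n p).degree ≤ (m:ℕ) ∧ (Bop n p).coeff m = bernsteinEigenvalue n m * p.coeff m := by
  intro m
  induction m with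
  | zero =>
    intro _ p hp
    have hp' := Polynomial.eq_C_of_degree_le_zero hp
    rw [hp', show C (p.coeff 0) = (p.coeff 0) • (1 : Polynomial ℝ) from by simp [smul_eq_C_mul],
      Bop_smul, Bop_one n hn0]
    constructor
    · exact le_trans (degree_smul_le _ _) (by simp)
    · simp [lam0]
  | succ m ih =>
    intro hm p hp
    set c := p.coeff (m+1) with hc
    set r := p - c • Qp n (m+1) with hr
    have hrc : r.coeff (m+1) = 0 := by
      rw [hr, coeff_sub, coeff_smul, QpCoeffTop, smul_eq_mul, mul_one, sub_self]
    have hQdeg : (Qp n (m+1)).degree ≤ ((m+1 : ℕ) : WithBot ℕ) := le_of_eq (Qp_degree n (m+1))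
    have hrdeg1 : r.degree ≤ ((m+1 : ℕ) : WithBot ℕ) :=
      le_trans (degree_sub_le _ _) (max_le hp (le_trans (degree_smul_le _ _) hQdeg))
    have hrdeg : r.degree ≤ (m:ℕ) := deg_step r m hrdeg1 hrc
    have hrp : p = c • Qp n (m+1) + r := by rw [hr]; ring
    obtain ⟨ih1, ih2⟩ := ih (by omega) r hrdeg
    rw [hrp, Bop_add, Bop_smul, Bop_Qp n (m+1) hm hn0]
    have hBr : (Bop n r).coeff (m+1) = 0 :=
      coeff_eq_zero_of_degree_lt (lt_of_le_of_lt ih1 (by exact_mod_cast Nat.lt_succ_self m))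
    constructor
    · refine le_trans (degree_add_le _ _) (max_le ?_ ?_)
      · exact le_trans (degree_smul_le _ _) (le_trans (degree_smul_le _ _)
          (le_of_eq (degree_X_pow _)))
      · exact le_trans ih1 (by exact_mod_cast (by omega : m ≤ m + 1))
    · rw [coeff_add, coeff_smul, coeff_smul, coeff_X_pow, hBr, if_pos rfl]
      simp [smul_eq_mul]
      ring

def Dop (n m : ℕ) (p : Polynomial ℝ) : Polynomial ℝ := Bop n p - bernsteinEigenvalue n m • p

lemma Dop_comm (n i j : ℕ) (p : Polynomial ℝ) : Dop n i (Dop n j p) = Dop n j (Dop n i p) := by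
  simp only [Dop, Bop_sub, Bop_smul, smul_sub, smul_smul]
  simp only [smul_eq_C_mul, C_mul]
  ring

lemma Dop_deg_coeff (n : ℕ) (hn0 : (n:ℝ) ≠ 0) (k m : ℕ) (hk : k ≤ n) (p : Polynomial ℝ)
    (hp : p.degree ≤ (k:ℕ)) :
    (Dop n m p).degree ≤ (k:ℕ) ∧
      (Dop n m p).coeff k = (bernsteinEigenvalue n k - bernsteinEigenvalue n m) * p.coeff k := by
  obtain ⟨h1, h2⟩ := Bop_deg n hn0 k hk p hp
  constructor
  · exact le_trans (degree_sub_le _ _) (max_le h1 (le_trans (degree_smul_le _ _) hp))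
  · rw [Dop, coeff_sub, coeff_smul, h2, smul_eq_mul]; ring

def appD (n : ℕ) : ℕ → Polynomial ℝ → Polynomial ℝ
  | 0, p => p
  | (j+1), p => appD n j (Dop n (j+1) p)

lemma appD_D (n i : ℕ) : ∀ j (p : Polynomial ℝ), Dop n i (appD n j p) = appD n j (Dop n i p) := by
  intro j
  induction j with
  | zero => intro p; rw [appD, appD]
  | succ j ih =>
    intro p
    rw [appD, appD]
    rw [ih, Dop_comm]

lemma appD_zero (n : ℕ) (hn0 : (n:ℝ) ≠ 0) : ∀ j, 1 ≤ j → j ≤ n → ∀ p : Polynomial ℝ,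
    p.degree ≤ (j:ℕ) → appD n j p = 0 := by
  intro j
  induction j with
  | zero => omega
  | succ j ih =>
    intro _ hjn p hp
    rcases Nat.eq_zero_or_pos j with rfl | hj
    · show Dop n 1 p = 0
      have hp1 := Polynomial.eq_X_add_C_of_degree_le_one (by exact_mod_cast hp)
      have key : Bop n p = p := by
        conv_lhs => rw [hp1]
        rw [show C (p.coeff 1) * X + C (p.coeff 0)
              = (p.coeff 1) • (X : Polynomial ℝ) + (p.coeff 0) • (1 : Polynomial ℝ) from by
            simp [smul_eq_C_mul]]
        rw [Bop_add, Bop_smul, Bop_smul, Bop_one n hn0, Bop_X n (by omega) hn0]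
        conv_rhs => rw [hp1]
        simp [smul_eq_C_mul]
      rw [Dop, key, lam1 n (by omega), one_smul, sub_self]
    · show appD n j (Dop n (j+1) p) = 0
      refine ih hj (by omega) _ ?_
      have hd := Dop_deg_coeff n hn0 (j+1) (j+1) hjn p hp
      refine deg_step _ _ hd.1 ?_
      rw [hd.2, sub_self, zero_mul]

lemma appD_coeff (n : ℕ) (hn0 : (n:ℝ) ≠ 0) (k : ℕ) (hk : k ≤ n) :
    ∀ j (p : Polynomial ℝ), p.degree ≤ (k:ℕ) →
    (appD n j p).degree ≤ (k:ℕ) ∧ (appD n j p).coeff k =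
      (∏ i ∈ Finset.range j, (bernsteinEigenvalue n k - bernsteinEigenvalue n (i+1))) * p.coeff k := by
  intro j
  induction j with
  | zero => intro p hp; exact ⟨hp, by simp [appD]⟩
  | succ j ih =>
    intro p hp
    have hd := Dop_deg_coeff n hn0 k (j+1) hk p hp
    obtain ⟨hd1, hd2⟩ := ih (Dop n (j+1) p) hd.1
    refine ⟨hd1, ?_⟩
    show (appD n j (Dop n (j+1) p)).coeff k = _
    rw [hd2, hd.2, Finset.prod_range_succ]
    ring

/-- **Eigenvalues of the Bernstein operator** (Calugareanu).
The Bernstein operator `B_n` (restricted to polynomials of degree ≤ n) has eigenvalues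
`λ_{k,n} = n!/((n−k)! n^k)`, `k = 0, …, n`, each with a polynomial eigenfunction of degree `k`,
and `1 = λ_{0,n} = λ_{1,n} > λ_{2,n} > ⋯ > λ_{n,n} = n!/n^n`; in particular the second largest
eigenvalue is `λ_{2,n} = (n−1)/n`. -/
theorem bernstein_eigenvalues (n : ℕ) (hn : 2 ≤ n) :
    (∀ k ≤ n, ∃ q : Polynomial ℝ, q ≠ 0 ∧ q.natDegree = k ∧
        ∀ x : ℝ, bernsteinOp n (fun y => q.eval y) x = bernsteinEigenvalue n k * q.eval x) ∧
      bernsteinEigenvalue n 0 = 1 ∧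
      bernsteinEigenvalue n 1 = 1 ∧
      (∀ k, 1 ≤ k → k < n → bernsteinEigenvalue n (k + 1) < bernsteinEigenvalue n k) ∧
      bernsteinEigenvalue n n = (n.factorial : ℝ) / (n : ℝ) ^ n ∧
      bernsteinEigenvalue n 2 = ((n : ℝ) - 1) / n := by
  have hn0 : (n:ℝ) ≠ 0 := Nat.cast_ne_zero.mpr (by omega)
  refine ⟨?_, lam0 n, lam1 n (by omega), fun k h1 h2 => lam_step n k h1 h2, lamn n, lam2 n hn⟩
  intro k hk
  by_cases hk0 : k = 0
  · subst hk0
    refine ⟨1, one_ne_zero, natDegree_one, fun x => ?_⟩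
    rw [← Bop_eval, Bop_one n hn0, lam0]
    simp
  by_cases hk1 : k = 1
  · subst hk1
    refine ⟨X, X_ne_zero, natDegree_X, fun x => ?_⟩
    rw [← Bop_eval, Bop_X n (by omega) hn0, lam1 n (by omega)]
    simp
  have hk2 : 2 ≤ k := by omega
  set p := appD n (k-1) (Qp n k) with hpdef
  have hQdeg : (Qp n k).degree ≤ (k:ℕ) := le_of_eq (Qp_degree n k)
  obtain ⟨hp1, hp2⟩ := appD_coeff n hn0 k hk (k-1) (Qp n k) hQdeg
  have hcoeff : p.coeff k =
      ∏ i ∈ Finset.range (k-1), (bernsteinEigenvalue n k - bernsteinEigenvalue n (i+1)) := by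
    rw [hpdef, hp2, QpCoeffTop, mul_one]
  have hne : p.coeff k ≠ 0 := by
    rw [hcoeff]
    refine Finset.prod_ne_zero_iff.mpr fun i hi => ?_
    have hilt : i + 1 < k := by have := Finset.mem_range.mp hi; omega
    exact sub_ne_zero.mpr (ne_of_lt (lam_mono n (i+1) k (by omega) hilt hk))
  have hpne : p ≠ 0 := fun h => hne (by simp [h])
  have hdeg : p.natDegree = k :=
    le_antisymm (natDegree_le_iff_degree_le.mpr hp1) (le_natDegree_of_ne_zero hne)
  have heig : Bop n p = bernsteinEigenvalue n k • p := by
    have e : k - 1 + 1 = k := by omega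
    have hd := Dop_deg_coeff n hn0 k k hk (Qp n k) hQdeg
    have h1 : (Dop n k (Qp n k)).degree ≤ ((k-1+1 : ℕ) : WithBot ℕ) := by rw [e]; exact hd.1
    have h2 : (Dop n k (Qp n k)).coeff (k-1+1) = 0 := by
      rw [e, hd.2, sub_self, zero_mul]
    have hdle : (Dop n k (Qp n k)).degree ≤ ((k-1 : ℕ) : WithBot ℕ) := deg_step _ _ h1 h2
    have hz : Dop n k p = 0 := by
      rw [hpdef, appD_D]
      exact appD_zero n hn0 (k-1) (by omega) (by omega) _ hdle
    rw [Dop] at hz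
    exact sub_eq_zero.mp hz
  refine ⟨p, hpne, hdeg, fun x => ?_⟩
  rw [← Bop_eval, heig]
  simp [smul_eq_C_mul]

end
end

section
/- For every polynomial p in the range of the Bernstein operator B_n (i.e., of degree at most n) and r < n, the r-th derivative satisfies ‖D^r (B_n f)‖_∞ ≤ (2^r n!/(n−r)!) ‖f‖_∞ for all f ∈ C([0,1]); thus the operator norm of D^r restricted to im(B_n) in the sup norm is at most 2^r n!/(n−r)!. -/
noncomputable section

open scoped ContDiff

lemma bernsteinOp_contDiff (n : ℕ) (f : ℝ → ℝ) : ContDiff ℝ ∞ (bernsteinOp n f) := by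
  unfold bernsteinOp
  apply ContDiff.sum
  intro k _
  exact ((contDiff_const.mul (contDiff_id.pow k)).mul
    ((contDiff_const.sub contDiff_id).pow (n - k)))

lemma iter_const_mul (c : ℝ) (r : ℕ) :
    ∀ (h : ℝ → ℝ), ContDiff ℝ ∞ h →
      iteratedDeriv r (fun x => c * h x) = fun x => c * iteratedDeriv r h x := by
  induction r with
  | zero => intro h _; simp
  | succ r ih =>
    intro h hh
    rw [iteratedDeriv_succ', iteratedDeriv_succ']
    have hd : deriv (fun x => c * h x) = fun x => c * deriv h x :=
      funext fun x => deriv_const_mul c ((contDiff_infty_iff_deriv.mp hh).1 x)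
    rw [hd, ih (deriv h) (contDiff_infty_iff_deriv.mp hh).2]

/-- Pointwise bound on the Bernstein polynomial itself. -/
lemma bernsteinOp_abs_le (n : ℕ) (f : ℝ → ℝ) (C : ℝ)
    (hC : ∀ y ∈ Set.Icc (0 : ℝ) 1, |f y| ≤ C)
    (x : ℝ) (hx : x ∈ Set.Icc (0 : ℝ) 1) : |bernsteinOp n f x| ≤ C := by
  obtain ⟨hx0, hx1⟩ := hx
  have hx1' : (0:ℝ) ≤ 1 - x := by linarith
  have hsum : ∑ k ∈ Finset.range (n + 1),
      (n.choose k : ℝ) * x ^ k * (1 - x) ^ (n - k) = 1 := by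
    calc ∑ k ∈ Finset.range (n + 1), (n.choose k : ℝ) * x ^ k * (1 - x) ^ (n - k)
        = (x + (1 - x)) ^ n := by
          rw [add_pow]
          exact Finset.sum_congr rfl fun k _ => by ring
      _ = 1 := by norm_num
  have hk : ∀ k ∈ Finset.range (n + 1), ((k : ℝ) / n) ∈ Set.Icc (0 : ℝ) 1 := by
    intro k hk
    rw [Finset.mem_range] at hk
    constructor
    · positivity
    · rcases Nat.eq_zero_or_pos n with h | h
      · subst h; interval_cases k; simp
      · rw [div_le_one (by exact_mod_cast h)]
        exact_mod_cast Nat.lt_succ_iff.mp hk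
  calc |bernsteinOp n f x| ≤ ∑ k ∈ Finset.range (n + 1),
        |f ((k : ℝ) / n) * (n.choose k : ℝ) * x ^ k * (1 - x) ^ (n - k)| :=
        Finset.abs_sum_le_sum_abs _ _
    _ ≤ ∑ k ∈ Finset.range (n + 1),
        C * ((n.choose k : ℝ) * x ^ k * (1 - x) ^ (n - k)) := by
        apply Finset.sum_le_sum
        intro k hk'
        have hw : (0:ℝ) ≤ (n.choose k : ℝ) * x ^ k * (1 - x) ^ (n - k) :=
          mul_nonneg (mul_nonneg (Nat.cast_nonneg _) (pow_nonneg hx0 _)) (pow_nonneg hx1' _)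
        have : |f ((k : ℝ) / n) * (n.choose k : ℝ) * x ^ k * (1 - x) ^ (n - k)|
            = |f ((k : ℝ) / n)| * ((n.choose k : ℝ) * x ^ k * (1 - x) ^ (n - k)) := by
          rw [abs_mul, abs_mul, abs_mul, abs_of_nonneg (Nat.cast_nonneg _ : (0:ℝ) ≤ (n.choose k:ℝ)),
            abs_of_nonneg (pow_nonneg hx0 k), abs_of_nonneg (pow_nonneg hx1' (n-k))]
          ring
        rw [this]
        exact mul_le_mul_of_nonneg_right (hC _ (hk k hk')) hw
    _ = C := by rw [← Finset.mul_sum, hsum, mul_one]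

/-- The key recursion: derivative of a Bernstein polynomial. -/
lemma bernsteinOp_deriv (m : ℕ) (f : ℝ → ℝ) :
    deriv (bernsteinOp (m + 1) f) = fun x => (((m + 1 : ℕ)) : ℝ) *
      bernsteinOp m (fun y => f ((y * m + 1) / (m + 1)) - f (y * m / (m + 1))) x := by
  funext x
  unfold bernsteinOp
  have H : HasDerivAt (fun x : ℝ => ∑ k ∈ Finset.range (m + 1 + 1),
        f ((k : ℝ) / ((m + 1 : ℕ) : ℝ)) * (((m + 1).choose k : ℕ) : ℝ) * x ^ k *
          (1 - x) ^ (m + 1 - k))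
      (∑ k ∈ Finset.range (m + 1 + 1),
        (f ((k : ℝ) / ((m + 1 : ℕ) : ℝ)) * (((m + 1).choose k : ℕ) : ℝ) *
            ((k : ℝ) * x ^ (k - 1)) * (1 - x) ^ (m + 1 - k)
          + f ((k : ℝ) / ((m + 1 : ℕ) : ℝ)) * (((m + 1).choose k : ℕ) : ℝ) * x ^ k *
            (((m + 1 - k : ℕ) : ℝ) * (1 - x) ^ (m - k) * (-1)))) x := by
    apply HasDerivAt.fun_sum
    intro k _
    have h1 : HasDerivAt (fun x : ℝ => (1 - x) ^ (m + 1 - k))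
        (((m + 1 - k : ℕ) : ℝ) * (1 - x) ^ (m + 1 - k - 1) * (-1)) x :=
      (hasDerivAt_pow (m + 1 - k) (1 - x)).comp x ((hasDerivAt_id x).const_sub 1)
    have h2 : HasDerivAt
        (fun x : ℝ => f ((k : ℝ) / ((m + 1 : ℕ) : ℝ)) * (((m + 1).choose k : ℕ) : ℝ) * x ^ k)
        (f ((k : ℝ) / ((m + 1 : ℕ) : ℝ)) * (((m + 1).choose k : ℕ) : ℝ) * ((k : ℝ) * x ^ (k - 1)))
        x := (hasDerivAt_pow k x).const_mul _
    have h3 := h2.fun_mul h1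
    have hmk : m + 1 - k - 1 = m - k := by omega
    rw [hmk] at h3
    convert h3 using 1
  rw [H.deriv]
  -- now the combinatorial reindexing
  rw [Finset.sum_add_distrib]
  rw [Finset.sum_range_succ' (fun k => f ((k : ℝ) / ((m + 1 : ℕ) : ℝ)) *
      (((m + 1).choose k : ℕ) : ℝ) * ((k : ℝ) * x ^ (k - 1)) * (1 - x) ^ (m + 1 - k)) (m + 1)]
  rw [Finset.sum_range_succ (fun k => f ((k : ℝ) / ((m + 1 : ℕ) : ℝ)) *
      (((m + 1).choose k : ℕ) : ℝ) * x ^ k *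
      (((m + 1 - k : ℕ) : ℝ) * (1 - x) ^ (m - k) * (-1))) (m + 1)]
  have hz1 : f ((0 : ℕ) / ((m + 1 : ℕ) : ℝ)) * (((m + 1).choose 0 : ℕ) : ℝ) *
      (((0:ℕ) : ℝ) * x ^ (0 - 1)) * (1 - x) ^ (m + 1 - 0) = 0 := by
    norm_num
  have hz2 : f (((m+1 : ℕ) : ℝ) / ((m + 1 : ℕ) : ℝ)) * (((m + 1).choose (m+1) : ℕ) : ℝ) *
      x ^ (m+1) * (((m + 1 - (m+1) : ℕ) : ℝ) * (1 - x) ^ (m - (m+1)) * (-1)) = 0 := by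
    simp
  simp only [hz1, hz2, add_zero]
  rw [Finset.mul_sum, ← Finset.sum_add_distrib]
  apply Finset.sum_congr rfl
  intro k hk
  rw [Finset.mem_range] at hk
  have hkm : k ≤ m := Nat.lt_succ_iff.mp hk
  have hk0 : k = 0 ∨ 0 < m := by omega
  have harg : ((k : ℝ) / (m : ℝ)) * (m : ℝ) = (k : ℝ) := by
    rcases hk0 with h | h
    · subst h; simp
    · field_simp
  have e1 : f (((k : ℝ) / (m:ℝ)) * m / ((m:ℝ) + 1)) = f ((k : ℝ) / ((m:ℝ) + 1)) := by rw [harg]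
  have e2 : f ((((k : ℝ) / (m:ℝ)) * m + 1) / ((m:ℝ) + 1)) = f (((k : ℝ) + 1) / ((m:ℝ) + 1)) := by
    rw [harg]
  have c1 : (((m+1).choose (k+1) : ℕ) : ℝ) * ((k : ℝ) + 1)
      = ((m : ℝ) + 1) * ((m.choose k : ℕ) : ℝ) := by
    have h := Nat.add_one_mul_choose_eq m k
    have h' := congrArg (Nat.cast (R := ℝ)) h
    push_cast at h'
    linarith
  have c2 : (((m+1).choose k : ℕ) : ℝ) * ((m + 1 - k : ℕ) : ℝ)
      = ((m : ℝ) + 1) * ((m.choose k : ℕ) : ℝ) := by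
    have h := Nat.choose_mul_succ_eq m k
    have h' := congrArg (Nat.cast (R := ℝ)) h
    push_cast [Nat.cast_sub (by omega : k ≤ m + 1)] at h'
    push_cast [Nat.cast_sub (by omega : k ≤ m + 1)]
    linarith
  have hpow : x ^ (k + 1 - 1) = x ^ k := by norm_num
  have hmk2 : m + 1 - (k + 1) = m - k := by omega
  push_cast [hmk2, hpow] at *
  rw [e1, e2]
  linear_combination (f (((k:ℝ) + 1) / ((m:ℝ) + 1)) * x ^ k * (1 - x) ^ (m - k)) * c1
    - (f ((k:ℝ) / ((m:ℝ) + 1)) * x ^ k * (1 - x) ^ (m - k)) * c2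

/-- Main inductive bound. -/
lemma bernstein_deriv_bound_aux : ∀ (r n : ℕ), r ≤ n → ∀ (f : ℝ → ℝ) (C : ℝ),
    (∀ y ∈ Set.Icc (0 : ℝ) 1, |f y| ≤ C) →
    ∀ x ∈ Set.Icc (0 : ℝ) 1,
      |iteratedDeriv r (bernsteinOp n f) x| ≤
        2 ^ r * ((n.factorial : ℝ) / ((n - r).factorial : ℝ)) * C := by
  intro r
  induction r with
  | zero =>
    intro n _ f C hC x hx
    have h1 : ((n.factorial : ℝ) / ((n - 0).factorial : ℝ)) = 1 := by
      rw [Nat.sub_zero]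
      exact div_self (by positivity)
    rw [iteratedDeriv_zero, pow_zero, h1, one_mul, one_mul]
    exact bernsteinOp_abs_le n f C hC x hx
  | succ r ih =>
    intro n hrn f C hC x hx
    obtain ⟨m, rfl⟩ : ∃ m, n = m + 1 := ⟨n - 1, by omega⟩
    have hrm : r ≤ m := by omega
    set g : ℝ → ℝ := fun y => f ((y * m + 1) / (m + 1)) - f (y * m / (m + 1)) with hg
    have hC0 : 0 ≤ C := le_trans (abs_nonneg _) (hC 0 (by norm_num))
    have hgC : ∀ y ∈ Set.Icc (0 : ℝ) 1, |g y| ≤ 2 * C := by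
      rintro y ⟨hy0, hy1⟩
      have hm1 : (0:ℝ) < (m:ℝ) + 1 := by positivity
      have hym : (0:ℝ) ≤ y * m := by positivity
      have hym' : y * (m:ℝ) ≤ m := by
        calc y * (m:ℝ) ≤ 1 * m := mul_le_mul_of_nonneg_right hy1 (Nat.cast_nonneg m)
          _ = m := one_mul _
      have h1 : (y * m + 1) / ((m:ℝ) + 1) ∈ Set.Icc (0:ℝ) 1 := by
        constructor
        · positivity
        · rw [div_le_one hm1]; linarith
      have h2 : y * m / ((m:ℝ) + 1) ∈ Set.Icc (0:ℝ) 1 := by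
        constructor
        · positivity
        · rw [div_le_one hm1]; linarith
      calc |g y| ≤ |f ((y * m + 1) / ((m:ℝ) + 1))| + |f (y * m / ((m:ℝ) + 1))| := abs_sub _ _
        _ ≤ C + C := add_le_add (hC _ h1) (hC _ h2)
        _ = 2 * C := by ring
    rw [iteratedDeriv_succ', bernsteinOp_deriv m f,
      iter_const_mul _ r _ (bernsteinOp_contDiff m g)]
    have key : |(((m + 1 : ℕ)) : ℝ) * iteratedDeriv r (bernsteinOp m g) x|
        = ((m:ℝ) + 1) * |iteratedDeriv r (bernsteinOp m g) x| := by
      rw [abs_mul, abs_of_nonneg (by positivity : (0:ℝ) ≤ ((m+1 : ℕ):ℝ))]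
      push_cast
      ring
    rw [key]
    have hIH := ih m hrm g (2 * C) hgC x hx
    have hfin : ((m:ℝ) + 1) * (2 ^ r * ((m.factorial : ℝ) / ((m - r).factorial : ℝ)) * (2 * C))
        = 2 ^ (r+1) * (((m+1).factorial : ℝ) / ((m + 1 - (r+1)).factorial : ℝ)) * C := by
      have hsub : m + 1 - (r + 1) = m - r := by omega
      rw [hsub, Nat.factorial_succ]
      have hne : ((m - r).factorial : ℝ) ≠ 0 := by positivity
      push_cast
      field_simp
      ring
    calc ((m:ℝ) + 1) * |iteratedDeriv r (bernsteinOp m g) x|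
        ≤ ((m:ℝ) + 1) * (2 ^ r * ((m.factorial : ℝ) / ((m - r).factorial : ℝ)) * (2 * C)) :=
          mul_le_mul_of_nonneg_left hIH (by positivity)
      _ = 2 ^ (r+1) * (((m+1).factorial : ℝ) / ((m + 1 - (r+1)).factorial : ℝ)) * C := hfin

/-- **Bound on derivatives of Bernstein polynomials.**
For `r < n`, `f ∈ C([0,1])` with `|f| ≤ C` on `[0,1]`, and every `x ∈ [0,1]`:
`|D^r (B_n f)(x)| ≤ 2^r (n!/(n−r)!) C`; thus the operator norm of `D^r` restricted to
`im B_n` in the sup norm is at most `2^r n!/(n−r)!`. -/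
theorem bernstein_deriv_bound (n r : ℕ) (hr : r < n) (f : ℝ → ℝ) (hf : Continuous f)
    (C : ℝ) (hC : ∀ y ∈ Set.Icc (0 : ℝ) 1, |f y| ≤ C)
    (x : ℝ) (hx : x ∈ Set.Icc (0 : ℝ) 1) :
    |iteratedDeriv r (bernsteinOp n f) x| ≤
      2 ^ r * ((n.factorial : ℝ) / ((n - r).factorial : ℝ)) * C := by
  exact bernstein_deriv_bound_aux r n hr.le f C hC x hx

end
end

section
/- For all f ∈ C([0,1]) and all t > 0: ω_2(f, t) ≤ 4(1 + n^3 t^2) ‖B_n f − f‖_∞; in particular, (1/8) ω_2(f, n^{−3/2}) ≤ ‖B_n f − f‖_∞. -/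
noncomputable section

/-- The sup norm of `g` on `[0,1]`. -/
def supNorm (g : ℝ → ℝ) : ℝ :=
  sSup ((fun x => |g x|) '' Set.Icc (0 : ℝ) 1)

/-- The second modulus of smoothness of `f` on `[0,1]` in the sup norm. -/
def omega2 (f : ℝ → ℝ) (t : ℝ) : ℝ :=
  sSup {v : ℝ | ∃ x h : ℝ, 0 < h ∧ h ≤ t ∧ 0 ≤ x ∧ x + 2 * h ≤ 1 ∧
    v = |f (x + 2 * h) - 2 * f (x + h) + f x|}

namespace BernsteinLower

/-- Basis function. -/
def pb (m k : ℕ) (x : ℝ) : ℝ := (m.choose k : ℝ) * x ^ k * (1 - x) ^ (m - k)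

/-- General Bernstein-type sum. -/
def bsum (m : ℕ) (c : ℕ → ℝ) (x : ℝ) : ℝ := ∑ k ∈ Finset.range (m + 1), c k * pb m k x

lemma bernsteinOp_eq_bsum (n : ℕ) (f : ℝ → ℝ) (x : ℝ) :
    bernsteinOp n f x = bsum n (fun k => f ((k : ℝ) / n)) x := by
  simp only [bernsteinOp, bsum, pb]
  exact Finset.sum_congr rfl fun k _ => by ring

lemma pb_top (m : ℕ) (x : ℝ) : pb m (m + 1) x = 0 := by
  simp [pb, Nat.choose_eq_zero_of_lt (Nat.lt_succ_self m)]

lemma hasDerivAt_one_sub_pow (e : ℕ) (x : ℝ) :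
    HasDerivAt (fun x : ℝ => (1 - x) ^ e) (-((e : ℝ) * (1 - x) ^ (e - 1))) x := by
  have h := (hasDerivAt_pow e (1 - x)).comp x ((hasDerivAt_id x).const_sub 1)
  simpa [Function.comp_def] using h

lemma hasDerivAt_pb_zero (m : ℕ) (x : ℝ) :
    HasDerivAt (fun x => pb (m + 1) 0 x) (-(((m : ℝ) + 1) * pb m 0 x)) x := by
  have h := hasDerivAt_one_sub_pow (m + 1) x
  have he : (fun x : ℝ => pb (m + 1) 0 x) = fun x : ℝ => (1 - x) ^ (m + 1) := by
    funext y; simp [pb]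
  rw [he]
  convert h using 1
  simp [pb]

lemma choose_id1 (m j : ℕ) :
    (m + 1) * m.choose j = (m + 1).choose (j + 1) * (j + 1) :=
  Nat.add_one_mul_choose_eq m j

lemma choose_id2 (m j : ℕ) :
    (m + 1) * m.choose (j + 1) = (m + 1).choose (j + 1) * (m - j) := by
  rw [Nat.add_one_mul_choose_eq m (j + 1), Nat.choose_succ_right_eq, Nat.succ_sub_succ]

lemma hasDerivAt_pb_succ (m j : ℕ) (x : ℝ) :
    HasDerivAt (fun x => pb (m + 1) (j + 1) x)
      (((m : ℝ) + 1) * (pb m j x - pb m (j + 1) x)) x := by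
  have hx : HasDerivAt (fun x : ℝ => x ^ (j + 1)) (((j : ℝ) + 1) * x ^ j) x := by
    simpa using hasDerivAt_pow (j + 1) x
  have hy := hasDerivAt_one_sub_pow (m - j) x
  have hprod := (hx.mul hy).const_mul (((m + 1).choose (j + 1) : ℝ))
  have he : (fun x => pb (m + 1) (j + 1) x)
      = fun x : ℝ => ((m + 1).choose (j + 1) : ℝ) * (x ^ (j + 1) * (1 - x) ^ (m - j)) := by
    funext y; simp [pb, Nat.succ_sub_succ]; ring
  rw [he]
  refine hprod.congr_deriv (Eq.symm ?_)
  have e1 : ((m : ℝ) + 1) * (m.choose j : ℝ) = ((m + 1).choose (j + 1) : ℝ) * ((j : ℝ) + 1) := by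
    exact_mod_cast congrArg (Nat.cast (R := ℝ)) (choose_id1 m j)
  have e2 : ((m : ℝ) + 1) * (m.choose (j + 1) : ℝ)
      = ((m + 1).choose (j + 1) : ℝ) * ((m - j : ℕ) : ℝ) := by
    exact_mod_cast congrArg (Nat.cast (R := ℝ)) (choose_id2 m j)
  simp only [pb, Nat.sub_sub]
  have hsub : m - (j + 1) = m - j - 1 := by omega
  rw [hsub]
  linear_combination (x ^ j * (1 - x) ^ (m - j)) * e1
    - (x ^ (j + 1) * (1 - x) ^ (m - j - 1)) * e2

lemma hasDerivAt_bsum (m : ℕ) (c : ℕ → ℝ) (x : ℝ) :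
    HasDerivAt (fun x => bsum (m + 1) c x)
      (bsum m (fun k => ((m : ℝ) + 1) * (c (k + 1) - c k)) x) x := by
  have dd : ℕ → ℝ := fun k => 0
  have H : HasDerivAt (fun x => ∑ k ∈ Finset.range (m + 2), c k * pb (m + 1) k x)
      (∑ k ∈ Finset.range (m + 2), c k *
        (Nat.rec (-(((m : ℝ) + 1) * pb m 0 x))
          (fun j _ => ((m : ℝ) + 1) * (pb m j x - pb m (j + 1) x)) k : ℝ)) x := by
    apply HasDerivAt.fun_sum
    intro k _
    cases k with
    | zero => exact (hasDerivAt_pb_zero m x).const_mul (c 0)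
    | succ j => exact (hasDerivAt_pb_succ m j x).const_mul (c (j + 1))
  have heq : (∑ k ∈ Finset.range (m + 2), c k *
        (Nat.rec (-(((m : ℝ) + 1) * pb m 0 x))
          (fun j _ => ((m : ℝ) + 1) * (pb m j x - pb m (j + 1) x)) k : ℝ))
      = bsum m (fun k => ((m : ℝ) + 1) * (c (k + 1) - c k)) x := by
    rw [Finset.sum_range_succ' _ (m + 1)]
    have tele : ∑ i ∈ Finset.range (m + 1),
        ((((m : ℝ) + 1) * (c i * pb m i x)) - (((m : ℝ) + 1) * (c (i + 1) * pb m (i + 1) x)))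
        = ((m : ℝ) + 1) * (c 0 * pb m 0 x) - ((m : ℝ) + 1) * (c (m + 1) * pb m (m + 1) x) :=
      Finset.sum_range_sub' (fun i => ((m : ℝ) + 1) * (c i * pb m i x)) (m + 1)
    have expand : ∀ i ∈ Finset.range (m + 1),
        c (i + 1) * (((m : ℝ) + 1) * (pb m i x - pb m (i + 1) x))
        = (((m : ℝ) + 1) * (c (i + 1) - c i)) * pb m i x
          + ((((m : ℝ) + 1) * (c i * pb m i x)) - (((m : ℝ) + 1) * (c (i + 1) * pb m (i + 1) x))) :=
      fun i _ => by ring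
    simp only [bsum]
    rw [Finset.sum_congr rfl expand, Finset.sum_add_distrib, tele, pb_top]
    have h0 : c 0 * (Nat.rec (-(((m : ℝ) + 1) * pb m 0 x))
        (fun j _ => ((m : ℝ) + 1) * (pb m j x - pb m (j + 1) x)) 0 : ℝ)
        = c 0 * (-(((m : ℝ) + 1) * pb m 0 x)) := rfl
    rw [h0]
    ring
  rw [show (fun x => bsum (m + 1) c x)
      = fun x => ∑ k ∈ Finset.range (m + 2), c k * pb (m + 1) k x from rfl]
  exact heq ▸ H

lemma pb_nonneg (m k : ℕ) {x : ℝ} (hx : x ∈ Set.Icc (0 : ℝ) 1) : 0 ≤ pb m k x := by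
  have h1 : (0 : ℝ) ≤ 1 - x := by linarith [hx.2]
  exact mul_nonneg (mul_nonneg (Nat.cast_nonneg _) (pow_nonneg hx.1 _)) (pow_nonneg h1 _)

lemma pb_sum (m : ℕ) (x : ℝ) : ∑ k ∈ Finset.range (m + 1), pb m k x = 1 := by
  have h := add_pow x (1 - x) m
  simp only [add_sub_cancel, one_pow] at h
  rw [show (1 : ℝ) = ∑ k ∈ Finset.range (m + 1),
      x ^ k * (1 - x) ^ (m - k) * (m.choose k : ℝ) from h]
  exact Finset.sum_congr rfl fun k _ => by simp [pb]; ring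

lemma bsum_abs_le (m : ℕ) (c : ℕ → ℝ) {x : ℝ} (hx : x ∈ Set.Icc (0 : ℝ) 1)
    {K : ℝ} (hK : ∀ k, k ≤ m → |c k| ≤ K) : |bsum m c x| ≤ K := by
  calc |bsum m c x| ≤ ∑ k ∈ Finset.range (m + 1), |c k * pb m k x| :=
        Finset.abs_sum_le_sum_abs _ _
    _ ≤ ∑ k ∈ Finset.range (m + 1), K * pb m k x := by
        apply Finset.sum_le_sum
        intro k hk
        rw [abs_mul, abs_of_nonneg (pb_nonneg m k hx)]
        exact mul_le_mul_of_nonneg_right (hK k (by simpa [Nat.lt_succ_iff] using hk))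
          (pb_nonneg m k hx)
    _ = K := by rw [← Finset.mul_sum, pb_sum, mul_one]

lemma continuous_bsum (m : ℕ) (c : ℕ → ℝ) : Continuous (fun x => bsum m c x) := by
  apply continuous_finset_sum
  intro k _
  unfold pb
  fun_prop

/-- Double mean value theorem for second differences. -/
lemma mvt2 (g g' g'' : ℝ → ℝ) (hg : ∀ y, HasDerivAt g (g' y) y)
    (hg' : ∀ y, HasDerivAt g' (g'' y) y) (x h : ℝ) (hh : 0 < h) :
    ∃ η ∈ Set.Ioo x (x + 2 * h),
      g (x + 2 * h) - 2 * g (x + h) + g x = h ^ 2 * g'' η := by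
  set φ : ℝ → ℝ := fun s => g (x + s + h) - g (x + s) with hφdef
  have hφ : ∀ s, HasDerivAt φ (g' (x + s + h) - g' (x + s)) s := by
    intro s
    have i1 : HasDerivAt (fun s : ℝ => x + s + h) 1 s := by
      simpa using ((hasDerivAt_id s).const_add x).add_const h
    have i2 : HasDerivAt (fun s : ℝ => x + s) 1 s := by
      simpa using (hasDerivAt_id s).const_add x
    have h1 := HasDerivAt.comp s (hg (x + s + h)) i1
    have h2 := HasDerivAt.comp s (hg (x + s)) i2
    have := h1.sub h2; simp only [mul_one] at this; exact this
  have hφc : ContinuousOn φ (Set.Icc 0 h) :=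
    (continuous_iff_continuousAt.mpr fun s => (hφ s).continuousAt).continuousOn
  obtain ⟨ξ, hξ, hs1⟩ := exists_hasDerivAt_eq_slope φ
    (fun s => g' (x + s + h) - g' (x + s)) hh hφc (fun s _ => hφ s)
  have hlt : x + ξ < x + ξ + h := by linarith
  obtain ⟨η, hη, hs2⟩ := exists_hasDerivAt_eq_slope g' g'' hlt
    (continuous_iff_continuousAt.mpr fun y => (hg' y).continuousAt).continuousOn
    (fun y _ => hg' y)
  refine ⟨η, ⟨?_, ?_⟩, ?_⟩
  · have := hη.1; have := hξ.1; linarith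
  · have := hη.2; have := hξ.2; linarith
  · have hφh : φ h = g (x + 2 * h) - g (x + h) := by
      simp only [hφdef]
      rw [show x + h + h = x + 2 * h by ring]
    have hφ0 : φ 0 = g (x + h) - g x := by
      simp only [hφdef]
      rw [show x + 0 + h = x + h by ring, add_zero]
    have hne : h ≠ 0 := ne_of_gt hh
    rw [hφh, hφ0] at hs1
    rw [show x + ξ + h - (x + ξ) = h by ring] at hs2
    have : g'' η = ((g (x + 2 * h) - g (x + h) - (g (x + h) - g x)) / (h - 0)) / h := by
      rw [hs2, hs1]
    field_simp at this
    linarith [this]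

/-- Second difference bound from a bound on the second derivative on `[0,1]`. -/
lemma abs_sd_le (g g' g'' : ℝ → ℝ) (hg : ∀ y, HasDerivAt g (g' y) y)
    (hg' : ∀ y, HasDerivAt g' (g'' y) y) {M : ℝ}
    (hM : ∀ y ∈ Set.Icc (0 : ℝ) 1, |g'' y| ≤ M) (x h : ℝ) (hh : 0 < h)
    (hx0 : 0 ≤ x) (hx1 : x + 2 * h ≤ 1) :
    |g (x + 2 * h) - 2 * g (x + h) + g x| ≤ h ^ 2 * M := by
  obtain ⟨η, hη, he⟩ := mvt2 g g' g'' hg hg' x h hh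
  rw [he, abs_mul, abs_of_nonneg (sq_nonneg h)]
  exact mul_le_mul_of_nonneg_left
    (hM η ⟨by linarith [hη.1], by linarith [hη.2]⟩) (sq_nonneg h)

end BernsteinLower

open BernsteinLower in
/-- **Lower estimate for the Bernstein operator.**
For all `f ∈ C([0,1])` and `t > 0`:
`ω₂(f,t) ≤ 4 (1 + n³ t²) ‖B_n f − f‖_∞`; in particular
`(1/8) ω₂(f, n^{−3/2}) ≤ ‖B_n f − f‖_∞`. -/
theorem bernstein_lower_estimate (n : ℕ) (hn : 2 < n) (f : ℝ → ℝ) (hf : Continuous f)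
    (t : ℝ) (ht : 0 < t) :
    omega2 f t ≤ 4 * (1 + (n : ℝ) ^ 3 * t ^ 2) * supNorm (fun x => bernsteinOp n f x - f x) ∧
      (1 / 8) * omega2 f ((n : ℝ) ^ (-(3 : ℝ) / 2)) ≤
        supNorm (fun x => bernsteinOp n f x - f x) := by
  obtain ⟨m, rfl⟩ : ∃ m, n = m + 3 := ⟨n - 3, by omega⟩
  clear hn
  set a : ℝ := (m : ℝ) + 3 with ha_def
  have ha : (0 : ℝ) < a := by positivity
  -- the coefficients and the derivative functions
  set c : ℕ → ℝ := fun k => f ((k : ℝ) / ((m + 3 : ℕ) : ℝ)) with hc_def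
  set c1 : ℕ → ℝ := fun k => (((m + 2 : ℕ) : ℝ) + 1) * (c (k + 1) - c k) with hc1_def
  set c2 : ℕ → ℝ := fun k => (((m + 1 : ℕ) : ℝ) + 1) * (c1 (k + 1) - c1 k) with hc2_def
  set F0 : ℝ → ℝ := fun x => bsum (m + 3) c x with hF0_def
  set F1 : ℝ → ℝ := fun x => bsum (m + 2) c1 x with hF1_def
  set F2 : ℝ → ℝ := fun x => bsum (m + 1) c2 x with hF2_def
  have hBf : ∀ x, bernsteinOp (m + 3) f x = F0 x := fun x => bernsteinOp_eq_bsum _ f x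
  have hF0 : ∀ x, HasDerivAt F0 (F1 x) x := fun x => hasDerivAt_bsum (m + 2) c x
  have hF1 : ∀ x, HasDerivAt F1 (F2 x) x := fun x => hasDerivAt_bsum (m + 1) c1 x
  -- the error function and its sup norm D
  set e : ℝ → ℝ := fun x => bernsteinOp (m + 3) f x - f x with he_def
  set D : ℝ := supNorm e with hD_def
  have hecont : Continuous e := by
    apply Continuous.sub _ hf
    apply continuous_finset_sum
    intro k _
    fun_prop
  have hDbdd : BddAbove ((fun x => |e x|) '' Set.Icc (0 : ℝ) 1) :=
    (isCompact_Icc.image (continuous_abs.comp hecont)).bddAbove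
  have hDub : ∀ y ∈ Set.Icc (0 : ℝ) 1, |e y| ≤ D :=
    fun y hy => le_csSup hDbdd ⟨y, hy, rfl⟩
  have hD0 : (0 : ℝ) ≤ D :=
    le_trans (abs_nonneg (e 0)) (hDub 0 ⟨le_refl 0, zero_le_one⟩)
  -- the sup M of |F2| on [0,1]
  set M : ℝ := sSup ((fun x => |F2 x|) '' Set.Icc (0 : ℝ) 1) with hM_def
  have hF2cont : Continuous F2 := continuous_bsum _ _
  have hMbdd : BddAbove ((fun x => |F2 x|) '' Set.Icc (0 : ℝ) 1) :=
    (isCompact_Icc.image (continuous_abs.comp hF2cont)).bddAbove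
  have hMub : ∀ y ∈ Set.Icc (0 : ℝ) 1, |F2 y| ≤ M :=
    fun y hy => le_csSup hMbdd ⟨y, hy, rfl⟩
  have hM0 : (0 : ℝ) ≤ M :=
    le_trans (abs_nonneg (F2 0)) (hMub 0 ⟨le_refl 0, zero_le_one⟩)
  -- second differences of f at the grid
  have hc2eq : ∀ k, c2 k = a * (a - 1) * (c (k + 2) - 2 * c (k + 1) + c k) := by
    intro k
    simp only [hc2_def, hc1_def, ha_def]
    push_cast
    ring
  have hcast : ((m + 3 : ℕ) : ℝ) = a := by push_cast [ha_def]; ring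
  -- each grid second difference is bounded
  have hgrid : ∀ k, k ≤ m + 1 →
      |c (k + 2) - 2 * c (k + 1) + c k| ≤ (1 / a) ^ 2 * M + 4 * D := by
    intro k hk
    have hxk : ((k : ℝ)) / a ≥ 0 := div_nonneg (Nat.cast_nonneg k) ha.le
    have hxk1 : (k : ℝ) / a + 2 * (1 / a) ≤ 1 := by
      have hk2 : (k : ℝ) + 2 ≤ a := by
        have : (k : ℝ) ≤ (m : ℝ) + 1 := by exact_mod_cast hk
        simp only [ha_def]; linarith
      calc (k : ℝ) / a + 2 * (1 / a) = ((k : ℝ) + 2) / a := by ring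
        _ ≤ 1 := by rw [div_le_one ha]; exact hk2
    have hck : ∀ j : ℕ, c j = f ((j : ℝ) / a) := fun j => by
      simp only [hc_def, hcast]
    have harg1 : ((k : ℝ) + 2) / a = (k : ℝ) / a + 2 * (1 / a) := by ring
    have harg2 : ((k : ℝ) + 1) / a = (k : ℝ) / a + 1 / a := by ring
    have hfc : ∀ j : ℕ, j = k + 2 ∨ j = k + 1 ∨ j = k → True := fun _ _ => trivial
    -- rewrite the second difference in terms of F0 and e
    have hfe : ∀ y : ℝ, f y = F0 y - e y := by
      intro y; simp only [he_def]; rw [hBf]; ring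
    have key : c (k + 2) - 2 * c (k + 1) + c k
        = (F0 ((k : ℝ) / a + 2 * (1 / a)) - 2 * F0 ((k : ℝ) / a + 1 / a) + F0 ((k : ℝ) / a))
          - (e ((k : ℝ) / a + 2 * (1 / a)) - 2 * e ((k : ℝ) / a + 1 / a) + e ((k : ℝ) / a)) := by
      rw [hck (k + 2), hck (k + 1), hck k]
      push_cast
      rw [harg1, harg2, hfe, hfe, hfe]
      ring
    rw [key]
    have h1a : (0 : ℝ) < 1 / a := by positivity
    have hB : |F0 ((k : ℝ) / a + 2 * (1 / a)) - 2 * F0 ((k : ℝ) / a + 1 / a) + F0 ((k : ℝ) / a)|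
        ≤ (1 / a) ^ 2 * M :=
      abs_sd_le F0 F1 F2 hF0 hF1 hMub _ _ h1a hxk hxk1
    have hmem : ∀ s : ℝ, 0 ≤ s → s ≤ 2 * (1 / a) → ((k : ℝ) / a + s) ∈ Set.Icc (0 : ℝ) 1 := by
      intro s hs1 hs2
      exact ⟨by positivity, by linarith⟩
    have hE : |e ((k : ℝ) / a + 2 * (1 / a)) - 2 * e ((k : ℝ) / a + 1 / a) + e ((k : ℝ) / a)|
        ≤ 4 * D := by
      have e1 := hDub _ (hmem (2 * (1 / a)) (by positivity) (le_refl _))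
      have e2 := hDub _ (hmem (1 / a) (by positivity) (by linarith))
      have e3 := hDub _ (hmem 0 (le_refl 0) (by positivity))
      rw [add_zero] at e3
      calc |e ((k:ℝ)/a + 2*(1/a)) - 2 * e ((k:ℝ)/a + 1/a) + e ((k:ℝ)/a)|
          ≤ |e ((k:ℝ)/a + 2*(1/a)) - 2 * e ((k:ℝ)/a + 1/a)| + |e ((k:ℝ)/a)| := abs_add_le _ _
        _ ≤ |e ((k:ℝ)/a + 2*(1/a))| + |2 * e ((k:ℝ)/a + 1/a)| + |e ((k:ℝ)/a)| := by
            linarith [abs_sub (e ((k:ℝ)/a + 2*(1/a))) (2 * e ((k:ℝ)/a + 1/a))]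
        _ = |e ((k:ℝ)/a + 2*(1/a))| + 2 * |e ((k:ℝ)/a + 1/a)| + |e ((k:ℝ)/a)| := by
            rw [abs_mul]; norm_num
        _ ≤ 4 * D := by linarith
    calc |(F0 _ - 2 * F0 _ + F0 _) - (e _ - 2 * e _ + e _)|
        ≤ |F0 ((k : ℝ) / a + 2 * (1 / a)) - 2 * F0 ((k : ℝ) / a + 1 / a) + F0 ((k : ℝ) / a)|
          + |e ((k : ℝ) / a + 2 * (1 / a)) - 2 * e ((k : ℝ) / a + 1 / a) + e ((k : ℝ) / a)| :=
          abs_sub _ _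
      _ ≤ (1 / a) ^ 2 * M + 4 * D := add_le_add hB hE
  -- bound on M
  have hMbound : M ≤ a * (a - 1) * ((1 / a) ^ 2 * M + 4 * D) := by
    refine csSup_le ⟨|F2 0|, ⟨0, ⟨le_refl 0, zero_le_one⟩, rfl⟩⟩ ?_
    rintro v ⟨y, hy, rfl⟩
    apply bsum_abs_le (m + 1) c2 hy
    intro k hk
    rw [hc2eq k, abs_mul, abs_of_nonneg (by nlinarith : (0:ℝ) ≤ a * (a - 1))]
    exact mul_le_mul_of_nonneg_left (hgrid k hk) (by nlinarith)
  have hMfinal : M ≤ 4 * a ^ 3 * D := by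
    have h2 : a * (a - 1) * ((1 / a) ^ 2 * M) = (a - 1) * M / a := by
      field_simp
    have h3 : M ≤ (a - 1) * M / a + 4 * a * (a - 1) * D := by
      calc M ≤ a * (a - 1) * ((1 / a) ^ 2 * M + 4 * D) := hMbound
        _ = (a - 1) * M / a + 4 * a * (a - 1) * D := by rw [mul_add, h2]; ring
    have h4 : M * a ≤ (a - 1) * M + 4 * a ^ 2 * (a - 1) * D := by
      have := mul_le_mul_of_nonneg_right h3 ha.le
      calc M * a ≤ ((a - 1) * M / a + 4 * a * (a - 1) * D) * a := this
        _ = (a - 1) * M + 4 * a ^ 2 * (a - 1) * D := by field_simp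
    nlinarith [sq_nonneg a, mul_nonneg (mul_nonneg (sq_nonneg a) hD0) ha.le]
  -- the main estimate for arbitrary t > 0
  have key : ∀ s : ℝ, 0 < s → omega2 f s ≤ 4 * (1 + a ^ 3 * s ^ 2) * D := by
    intro s hs
    have hRHS : (0 : ℝ) ≤ 4 * (1 + a ^ 3 * s ^ 2) * D := by positivity
    apply Real.sSup_le _ hRHS
    rintro v ⟨x, h, hh0, hht, hx0, hx1, rfl⟩
    have hfe : ∀ y : ℝ, f y = F0 y - e y := by
      intro y; simp only [he_def]; rw [hBf]; ring
    have hsplit : f (x + 2 * h) - 2 * f (x + h) + f x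
        = (F0 (x + 2 * h) - 2 * F0 (x + h) + F0 x)
          - (e (x + 2 * h) - 2 * e (x + h) + e x) := by
      rw [hfe, hfe, hfe]; ring
    rw [hsplit]
    have hB : |F0 (x + 2 * h) - 2 * F0 (x + h) + F0 x| ≤ h ^ 2 * M :=
      abs_sd_le F0 F1 F2 hF0 hF1 hMub x h hh0 hx0 hx1
    have hE : |e (x + 2 * h) - 2 * e (x + h) + e x| ≤ 4 * D := by
      have m1 : x + 2 * h ∈ Set.Icc (0:ℝ) 1 := ⟨by linarith, hx1⟩
      have m2 : x + h ∈ Set.Icc (0:ℝ) 1 := ⟨by linarith, by linarith⟩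
      have m3 : x ∈ Set.Icc (0:ℝ) 1 := ⟨hx0, by linarith⟩
      have e1 := hDub _ m1
      have e2 := hDub _ m2
      have e3 := hDub _ m3
      calc |e (x + 2*h) - 2 * e (x + h) + e x|
          ≤ |e (x + 2*h) - 2 * e (x + h)| + |e x| := abs_add_le _ _
        _ ≤ |e (x + 2*h)| + |2 * e (x + h)| + |e x| := by
            linarith [abs_sub (e (x + 2*h)) (2 * e (x + h))]
        _ = |e (x + 2*h)| + 2 * |e (x + h)| + |e x| := by rw [abs_mul]; norm_num
        _ ≤ 4 * D := by linarith
    have hh2 : h ^ 2 * M ≤ s ^ 2 * (4 * a ^ 3 * D) := by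
      apply mul_le_mul _ hMfinal hM0 (sq_nonneg s)
      exact pow_le_pow_left₀ hh0.le hht 2
    calc |(F0 (x + 2*h) - 2 * F0 (x + h) + F0 x) - (e (x + 2*h) - 2 * e (x + h) + e x)|
        ≤ |F0 (x + 2*h) - 2 * F0 (x + h) + F0 x| + |e (x + 2*h) - 2 * e (x + h) + e x| :=
          abs_sub _ _
      _ ≤ h ^ 2 * M + 4 * D := add_le_add hB hE
      _ ≤ s ^ 2 * (4 * a ^ 3 * D) + 4 * D := by linarith
      _ = 4 * (1 + a ^ 3 * s ^ 2) * D := by ring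
  have hcast3 : ((m + 3 : ℕ) : ℝ) = a := by push_cast [ha_def]; ring
  constructor
  · have := key t ht
    rw [hcast3]
    exact this
  · set t0 : ℝ := ((m + 3 : ℕ) : ℝ) ^ (-(3 : ℝ) / 2) with ht0_def
    have ht0pos : 0 < t0 := Real.rpow_pos_of_pos (by rw [hcast3]; exact ha) _
    have ht0sq : a ^ 3 * t0 ^ 2 = 1 := by
      rw [ht0_def, hcast3]
      rw [← Real.rpow_natCast (a ^ (-(3:ℝ)/2)) 2, ← Real.rpow_mul ha.le]
      rw [← Real.rpow_natCast a 3, ← Real.rpow_add ha]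
      norm_num
    have := key t0 ht0pos
    rw [ht0sq] at this
    norm_num at this
    linarith

end
end

section
/- The fixed point space of the Kantorovič operator K_n is the span of the constant function 1: ker(K_n − I) = span{1}. -/
noncomputable section

private lemma bernstein_sum_one (n : ℕ) (x : ℝ) :
    ∑ k ∈ Finset.range (n + 1), (n.choose k : ℝ) * x ^ k * (1 - x) ^ (n - k) = 1 := by
  have h := add_pow x (1 - x) n
  simp only [add_sub_cancel, one_pow] at h
  conv_rhs => rw [h]
  exact Finset.sum_congr rfl fun k _ => by ring

private lemma Ik_lt (n k : ℕ) : (k : ℝ) / (n + 1) < (k + 1 : ℝ) / (n + 1) := by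
  have hnp : (0:ℝ) < n + 1 := by positivity
  gcongr
  linarith

private lemma Ik_subset (n k : ℕ) (hk : k ≤ n) :
    Set.Icc ((k : ℝ) / (n + 1)) ((k + 1 : ℝ) / (n + 1)) ⊆ Set.Icc (0:ℝ) 1 := by
  have hnp : (0:ℝ) < n + 1 := by positivity
  apply Set.Icc_subset_Icc
  · positivity
  · rw [div_le_one hnp]
    have : (k:ℝ) ≤ n := by exact_mod_cast hk
    linarith

/-- The Kantorovič operator of order `n`. -/
def kantorovichOp (n : ℕ) (f : ℝ → ℝ) (x : ℝ) : ℝ :=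
  (n + 1 : ℝ) * ∑ k ∈ Finset.range (n + 1), (n.choose k : ℝ) * x ^ k * (1 - x) ^ (n - k) *
    ∫ u in ((k : ℝ) / (n + 1))..((k + 1 : ℝ) / (n + 1)), f u

/-- **Fixed points of the Kantorovič operator.**
A continuous `f` on `[0,1]` satisfies `K_n f = f` (on `[0,1]`) if and only if `f` is constant
on `[0,1]`, i.e. `ker (K_n − I) = span {1}`. -/
theorem kantorovich_fixed_points (n : ℕ) (f : ℝ → ℝ) (hf : Continuous f) :
    (∀ x ∈ Set.Icc (0 : ℝ) 1, kantorovichOp n f x = f x) ↔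
      ∃ c : ℝ, ∀ x ∈ Set.Icc (0 : ℝ) 1, f x = c := by
  have hnp : (0:ℝ) < n + 1 := by positivity
  constructor
  · intro hK
    obtain ⟨x0, hx0, hmax⟩ := isCompact_Icc.exists_isMaxOn (Set.nonempty_Icc.2 zero_le_one)
      hf.continuousOn
    set M := f x0 with hMdef
    have hle : ∀ y ∈ Set.Icc (0:ℝ) 1, f y ≤ M := fun y hy => isMaxOn_iff.mp hmax y hy
    refine ⟨M, ?_⟩
    -- integrals are bounded above by M / (n+1)
    have hIle : ∀ j, j ≤ n →
        (∫ u in ((j : ℝ) / (n + 1))..((j + 1 : ℝ) / (n + 1)), f u) ≤ M / (n + 1) := by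
      intro j hj
      have hmono := intervalIntegral.integral_mono_on (μ := MeasureTheory.volume)
        (f := f) (g := fun _ => M) (Ik_lt n j).le
        (hf.intervalIntegrable _ _) intervalIntegrable_const
        (fun y hy => hle y (Ik_subset n j hj hy))
      rw [intervalIntegral.integral_const, smul_eq_mul] at hmono
      calc (∫ u in ((j : ℝ) / (n + 1))..((j + 1 : ℝ) / (n + 1)), f u)
          ≤ (((j:ℝ) + 1) / (n + 1) - (j:ℝ) / (n + 1)) * M := hmono
        _ = M / (n + 1) := by field_simp; ring
    -- if an integral attains its max value, f ≡ M on that subinterval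
    have hconst : ∀ k, k ≤ n →
        (∫ u in ((k : ℝ) / (n + 1))..((k + 1 : ℝ) / (n + 1)), f u) = M / (n + 1) →
        ∀ t ∈ Set.Icc ((k : ℝ) / (n + 1)) ((k + 1 : ℝ) / (n + 1)), f t = M := by
      intro k hk hint t ht
      by_contra hne
      have hlt : f t < M := lt_of_le_of_ne (hle t (Ik_subset n k hk ht)) hne
      have hstrict := intervalIntegral.integral_lt_integral_of_continuousOn_of_le_of_exists_lt
        (f := f) (g := fun _ => M) (Ik_lt n k) hf.continuousOn continuousOn_const
        (fun y hy => hle y (Ik_subset n k hk (Set.Ioc_subset_Icc_self hy)))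
        ⟨t, ht, hlt⟩
      rw [intervalIntegral.integral_const, smul_eq_mul, hint] at hstrict
      have heq : ((k:ℝ) + 1) / (n + 1) - (k:ℝ) / (n + 1) = 1 / (n + 1) := by field_simp; ring
      rw [heq] at hstrict
      have : M / (n + 1) < M / (n + 1) := by
        calc M / (n + 1) < 1 / (n + 1) * M := hstrict
          _ = M / (n + 1) := by ring
      exact lt_irrefl _ this
    -- key: at a point of maximum, any subinterval with positive weight has maximal integral
    have hkey : ∀ x ∈ Set.Icc (0:ℝ) 1, f x = M → ∀ k, k ≤ n →
        0 < (n.choose k : ℝ) * x ^ k * (1 - x) ^ (n - k) →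
        (∫ u in ((k : ℝ) / (n + 1))..((k + 1 : ℝ) / (n + 1)), f u) = M / (n + 1) := by
      intro x hx hfx k hk hpos
      have heqK := hK x hx
      have h1 : ∑ j ∈ Finset.range (n + 1), (n.choose j : ℝ) * x ^ j * (1 - x) ^ (n - j) *
          (M - (n + 1) * ∫ u in ((j : ℝ) / (n + 1))..((j + 1 : ℝ) / (n + 1)), f u) = 0 := by
        have e1 : ∑ j ∈ Finset.range (n + 1), (n.choose j : ℝ) * x ^ j * (1 - x) ^ (n - j) *
            (M - (n + 1) * ∫ u in ((j : ℝ) / (n + 1))..((j + 1 : ℝ) / (n + 1)), f u)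
            = M * (∑ j ∈ Finset.range (n + 1),
                (n.choose j : ℝ) * x ^ j * (1 - x) ^ (n - j)) - kantorovichOp n f x := by
          unfold kantorovichOp
          rw [Finset.mul_sum, Finset.mul_sum, ← Finset.sum_sub_distrib]
          exact Finset.sum_congr rfl fun j _ => by ring
        rw [e1, bernstein_sum_one, heqK, hfx, mul_one, sub_self]
      have hterm : ∀ j ∈ Finset.range (n + 1),
          0 ≤ (n.choose j : ℝ) * x ^ j * (1 - x) ^ (n - j) *
          (M - (n + 1) * ∫ u in ((j : ℝ) / (n + 1))..((j + 1 : ℝ) / (n + 1)), f u) := by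
        intro j hj
        rw [Finset.mem_range, Nat.lt_succ_iff] at hj
        have hp : 0 ≤ (n.choose j : ℝ) * x ^ j * (1 - x) ^ (n - j) := by
          have h1 : (0:ℝ) ≤ x := hx.1
          have h2 : (0:ℝ) ≤ 1 - x := by linarith [hx.2]
          positivity
        have hq : 0 ≤ M - (n + 1) * ∫ u in ((j : ℝ) / (n + 1))..((j + 1 : ℝ) / (n + 1)), f u := by
          have := hIle j hj
          have h2 : ((n:ℝ) + 1) * (∫ u in ((j : ℝ) / (n + 1))..((j + 1 : ℝ) / (n + 1)), f u)
              ≤ ((n:ℝ) + 1) * (M / (n + 1)) := by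
            exact mul_le_mul_of_nonneg_left this (le_of_lt hnp)
          have h3 : ((n:ℝ) + 1) * (M / (n + 1)) = M := by field_simp
          linarith
        exact mul_nonneg hp hq
      have hzero := (Finset.sum_eq_zero_iff_of_nonneg hterm).mp h1 k
        (Finset.mem_range.mpr (Nat.lt_succ_of_le hk))
      have hfactor : M - (n + 1) * (∫ u in ((k : ℝ) / (n + 1))..((k + 1 : ℝ) / (n + 1)), f u)
          = 0 := by
        rcases mul_eq_zero.mp hzero with h | h
        · exact absurd h (ne_of_gt hpos)
        · exact h
      have : ((n:ℝ) + 1) * (∫ u in ((k : ℝ) / (n + 1))..((k + 1 : ℝ) / (n + 1)), f u) = M := by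
        linarith
      field_simp
      linarith
    -- there is an interior point where f attains its maximum
    obtain ⟨z, hz, hfz⟩ : ∃ z ∈ Set.Ioo (0:ℝ) 1, f z = M := by
      rcases eq_or_lt_of_le hx0.1 with h0 | h0
      · -- x0 = 0
        have hf0 : f 0 = M := by rw [← h0] at hMdef; rw [hMdef]
        have hw : 0 < (n.choose 0 : ℝ) * (0:ℝ) ^ 0 * (1 - (0:ℝ)) ^ (n - 0) := by norm_num
        have hI0 := hkey 0 (Set.left_mem_Icc.mpr zero_le_one) hf0 0 (Nat.zero_le n) hw
        refine ⟨1 / (2 * ((n:ℝ) + 1)), ⟨by positivity, ?_⟩, ?_⟩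
        · have : (1:ℝ) / (2 * ((n:ℝ) + 1)) ≤ 1 / 2 := by
            apply one_div_le_one_div_of_le <;> linarith
          linarith
        · apply hconst 0 (Nat.zero_le n) hI0
          constructor
          · rw [Nat.cast_zero, zero_div]
            positivity
          · push_cast
            rw [div_le_div_iff₀ (by positivity) hnp]
            ring_nf
            linarith
      rcases eq_or_lt_of_le hx0.2 with h1 | h1
      · -- x0 = 1
        have hf1 : f 1 = M := by rw [h1] at hMdef; rw [hMdef]
        have hw : 0 < (n.choose n : ℝ) * (1:ℝ) ^ n * (1 - (1:ℝ)) ^ (n - n) := by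
          simp [Nat.choose_self]
        have hIn := hkey 1 (Set.right_mem_Icc.mpr zero_le_one) hf1 n le_rfl hw
        refine ⟨1 - 1 / (2 * ((n:ℝ) + 1)), ⟨?_, ?_⟩, ?_⟩
        · have : (1:ℝ) / (2 * ((n:ℝ) + 1)) ≤ 1 / 2 := by
            apply one_div_le_one_div_of_le <;> linarith
          linarith
        · have : (0:ℝ) < 1 / (2 * ((n:ℝ) + 1)) := by positivity
          linarith
        · apply hconst n le_rfl hIn
          constructor
          · rw [div_le_iff₀ hnp]
            have h2 : (1:ℝ) / (2 * ((n:ℝ) + 1)) ≤ 1 / ((n:ℝ) + 1) := by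
              apply one_div_le_one_div_of_le <;> linarith
            have h3 : (1:ℝ) / ((n:ℝ) + 1) * ((n:ℝ) + 1) = 1 := by field_simp
            nlinarith
          · rw [le_div_iff₀ hnp]
            have : (0:ℝ) < 1 / (2 * ((n:ℝ) + 1)) := by positivity
            nlinarith
      · exact ⟨x0, ⟨h0, h1⟩, rfl⟩
    -- conclude: every subinterval has maximal integral, hence f ≡ M on [0,1]
    intro y hy
    obtain ⟨k, hk, hyk⟩ : ∃ k, k ≤ n ∧
        y ∈ Set.Icc ((k : ℝ) / (n + 1)) ((k + 1 : ℝ) / (n + 1)) := by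
      refine ⟨min n ⌊y * (n + 1)⌋₊, min_le_left _ _, ?_, ?_⟩
      · rw [div_le_iff₀ hnp]
        calc ((min n ⌊y * (n + 1)⌋₊ : ℕ) : ℝ) ≤ (⌊y * (n + 1)⌋₊ : ℝ) := by
              exact_mod_cast min_le_right _ _
          _ ≤ y * (n + 1) := Nat.floor_le (by have := hy.1; positivity)
      · rw [le_div_iff₀ hnp]
        rcases le_total n ⌊y * (n + 1)⌋₊ with h | h
        · rw [min_eq_left h]
          have : y * ((n:ℝ) + 1) ≤ (n:ℝ) + 1 := by nlinarith [hy.2, hnp]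
          linarith
        · rw [min_eq_right h]
          have := Nat.lt_floor_add_one (y * ((n:ℝ) + 1))
          push_cast
          push_cast at this
          linarith
    have hw : 0 < (n.choose k : ℝ) * z ^ k * (1 - z) ^ (n - k) := by
      have hc : 0 < (n.choose k : ℝ) := by exact_mod_cast Nat.choose_pos hk
      have hz1 : 0 < z := hz.1
      have hz2 : 0 < 1 - z := by linarith [hz.2]
      positivity
    exact hconst k hk (hkey z (Set.Ioo_subset_Icc_self hz) hfz k hk hw) y hyk
  · rintro ⟨c, hc⟩ x hx
    unfold kantorovichOp
    have hint : ∀ k ∈ Finset.range (n + 1),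
        (n.choose k : ℝ) * x ^ k * (1 - x) ^ (n - k) *
          (∫ u in ((k : ℝ) / (n + 1))..((k + 1 : ℝ) / (n + 1)), f u)
        = (n.choose k : ℝ) * x ^ k * (1 - x) ^ (n - k) * (c / (n + 1)) := by
      intro k hk
      rw [Finset.mem_range, Nat.lt_succ_iff] at hk
      congr 1
      rw [intervalIntegral.integral_congr (g := fun _ => c)]
      · rw [intervalIntegral.integral_const, smul_eq_mul]
        field_simp
        ring
      · intro u hu
        rw [Set.uIcc_of_le (Ik_lt n k).le] at hu
        exact hc u (Ik_subset n k hk hu)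
    rw [Finset.sum_congr rfl hint, ← Finset.sum_mul, bernstein_sum_one]
    rw [hc x hx]
    field_simp

end
end

section
/- The operator norm of the differentiation operator D restricted to the range of the Kantorovič operator K_n satisfies ‖D|_{im(K_n)} ∘ K_n‖ ≤ 4(n² + n), i.e., ‖D K_n f‖_p ≤ 4(n²+n)‖f‖_1 for suitable f. -/
noncomputable section

open MeasureTheory

/-- Each Bernstein basis term is at most 1 on `[0,1]`. -/
lemma bern_le_one (m j : ℕ) {x : ℝ} (h0 : 0 ≤ x) (h1 : x ≤ 1) :
    (m.choose j : ℝ) * x ^ j * (1 - x) ^ (m - j) ≤ 1 := by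
  rcases le_or_gt j m with hj | hj
  · have key : ∑ i ∈ Finset.range (m + 1),
        x ^ i * (1 - x) ^ (m - i) * (m.choose i : ℝ) = 1 := by
      rw [← add_pow]; simp
    have hnn : ∀ i ∈ Finset.range (m + 1),
        0 ≤ x ^ i * (1 - x) ^ (m - i) * (m.choose i : ℝ) := by
      intro i _
      have := sub_nonneg.mpr h1
      positivity
    have hmem : j ∈ Finset.range (m + 1) := Finset.mem_range.mpr (Nat.lt_succ_of_le hj)
    calc (m.choose j : ℝ) * x ^ j * (1 - x) ^ (m - j)
        = x ^ j * (1 - x) ^ (m - j) * (m.choose j : ℝ) := by ring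
      _ ≤ ∑ i ∈ Finset.range (m + 1), x ^ i * (1 - x) ^ (m - i) * (m.choose i : ℝ) :=
          Finset.single_le_sum hnn hmem
      _ = 1 := key
  · simp [Nat.choose_eq_zero_of_lt hj]

lemma nat_idA (n j : ℕ) (hn : 1 ≤ n) :
    (j + 1) * n.choose (j + 1) = n * (n - 1).choose j := by
  have h := Nat.add_one_mul_choose_eq (n - 1) j
  have hn1 : n - 1 + 1 = n := by omega
  rw [hn1] at h
  rw [Nat.mul_comm, ← h]

lemma nat_idB (n k : ℕ) (hn : 1 ≤ n) :
    (n - k) * n.choose k = n * (n - 1).choose k := by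
  have h := Nat.choose_mul_succ_eq (n - 1) k
  have hn1 : n - 1 + 1 = n := by omega
  rw [hn1] at h
  rw [Nat.mul_comm, ← h, Nat.mul_comm]

/-- **Bound for the derivative of the Kantorovič operator:**
`‖D K_n f‖_∞ ≤ 4 (n² + n) ‖f‖_1`, i.e. the operator norm of `D ∘ K_n` from
`L¹([0,1])` to `C([0,1])` is at most `4(n² + n)`. -/
theorem kantorovich_deriv_bound (n : ℕ) (hn : 2 ≤ n) (f : ℝ → ℝ)
    (hf : IntervalIntegrable f MeasureTheory.volume 0 1)
    (x : ℝ) (hx : x ∈ Set.Icc (0 : ℝ) 1) :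
    |deriv (kantorovichOp n f) x| ≤
      4 * ((n : ℝ) ^ 2 + n) * ∫ u in (0 : ℝ)..1, |f u| := by
  obtain ⟨hx0, hx1⟩ := hx
  have h1x : (0 : ℝ) ≤ 1 - x := sub_nonneg.mpr hx1
  have hnpos : (0 : ℝ) < (n : ℝ) + 1 := by positivity
  set a : ℕ → ℝ := fun k => ∫ u in ((k : ℝ) / (n + 1))..((k + 1 : ℝ) / (n + 1)), f u with ha
  -- Step 1: compute the derivative
  have hd : HasDerivAt (kantorovichOp n f)
      ((n + 1 : ℝ) * ∑ k ∈ Finset.range (n + 1),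
        ((n.choose k : ℝ) * ((k : ℝ) * x ^ (k - 1)) * (1 - x) ^ (n - k)
          + (n.choose k : ℝ) * x ^ k * (((n - k : ℕ) : ℝ) * (1 - x) ^ (n - k - 1) * (-1))) *
        a k) x := by
    unfold kantorovichOp
    refine HasDerivAt.const_mul _ (HasDerivAt.fun_sum fun k _ => ?_)
    have h1 : HasDerivAt (fun y : ℝ => (1 - y) ^ (n - k))
        ((((n - k : ℕ) : ℝ) * (1 - x) ^ (n - k - 1)) * (-1)) x :=
      (hasDerivAt_pow (n - k) (1 - x)).comp x ((hasDerivAt_id x).const_sub 1)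
    have h2 : HasDerivAt (fun y : ℝ => (n.choose k : ℝ) * y ^ k)
        ((n.choose k : ℝ) * ((k : ℝ) * x ^ (k - 1))) x :=
      (hasDerivAt_pow k x).const_mul _
    exact (h2.mul h1).mul_const (a k)
  rw [hd.deriv]
  set I : ℝ := ∫ u in (0 : ℝ)..1, |f u| with hI
  have hIpos : 0 ≤ I :=
    intervalIntegral.integral_nonneg (by norm_num) (fun u _ => abs_nonneg _)
  -- sub-interval endpoints are ordered
  have hkk : ∀ k : ℕ, (k : ℝ) / (n + 1) ≤ ((k : ℝ) + 1) / (n + 1) := by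
    intro k; gcongr; linarith
  have hsubint : ∀ k, k ≤ n → IntervalIntegrable (fun u => |f u|) MeasureTheory.volume
      ((k : ℝ) / (n + 1)) (((k : ℝ) + 1) / (n + 1)) := by
    intro k hk
    refine hf.abs.mono_set ?_
    rw [Set.uIcc_of_le (hkk k), Set.uIcc_of_le (by norm_num : (0:ℝ) ≤ 1)]
    refine Set.Icc_subset_Icc (by positivity) ?_
    rw [div_le_one hnpos]
    have : (k : ℝ) ≤ n := by exact_mod_cast hk
    linarith
  -- telescoping sum of subinterval integrals of |f|
  have e1 : ∀ k : ℕ, (((k + 1 : ℕ) : ℝ)) / (n + 1) = ((k : ℝ) + 1) / (n + 1) := by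
    intro k; push_cast; ring
  have hint : ∀ k < n + 1, IntervalIntegrable (fun u => |f u|) MeasureTheory.volume
      ((k : ℝ) / (n + 1)) (((k + 1 : ℕ) : ℝ) / (n + 1)) := by
    intro k hk
    rw [e1 k]
    exact hsubint k (Nat.lt_succ_iff.mp hk)
  have hsum : ∑ k ∈ Finset.range (n + 1),
      (∫ u in ((k : ℝ) / (n + 1))..(((k : ℝ) + 1) / (n + 1)), |f u|) = I := by
    have ht := intervalIntegral.sum_integral_adjacent_intervals
      (μ := MeasureTheory.volume) (a := fun k : ℕ => (k : ℝ) / (n + 1))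
      (f := fun u => |f u|) (n := n + 1) hint
    simp only [e1] at ht
    rw [ht]
    norm_num [div_self (ne_of_gt hnpos), hI]
  -- bound each |a k|
  have habs : ∀ k, |a k| ≤ ∫ u in ((k : ℝ) / (n + 1))..(((k : ℝ) + 1) / (n + 1)), |f u| :=
    fun k => intervalIntegral.abs_integral_le_integral_abs (hkk k)
  -- bound each derivative coefficient by 2n
  have hcoef : ∀ k ∈ Finset.range (n + 1),
      |(n.choose k : ℝ) * ((k : ℝ) * x ^ (k - 1)) * (1 - x) ^ (n - k)
        + (n.choose k : ℝ) * x ^ k * (((n - k : ℕ) : ℝ) * (1 - x) ^ (n - k - 1) * (-1))|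
      ≤ 2 * n := by
    intro k hk
    have hkn : k ≤ n := Nat.lt_succ_iff.mp (Finset.mem_range.mp hk)
    set A : ℝ := (n.choose k : ℝ) * ((k : ℝ) * x ^ (k - 1)) * (1 - x) ^ (n - k) with hAdef
    set B : ℝ := (n.choose k : ℝ) * x ^ k * (((n - k : ℕ) : ℝ) * (1 - x) ^ (n - k - 1)) with hBdef
    have hAnn : 0 ≤ A := by
      apply mul_nonneg (mul_nonneg (by positivity) (by positivity)) (pow_nonneg h1x _)
    have hBnn : 0 ≤ B := by
      apply mul_nonneg (mul_nonneg (by positivity) (by positivity))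
      exact mul_nonneg (by positivity) (pow_nonneg h1x _)
    have hA : A ≤ n := by
      rcases k with _ | j
      · simp [hAdef]
      · have hidR : ((j : ℝ) + 1) * (n.choose (j + 1) : ℝ)
            = (n : ℝ) * ((n - 1).choose j : ℝ) := by
          exact_mod_cast nat_idA n j (by omega)
        have hexp : n - (j + 1) = (n - 1) - j := by omega
        have hb := bern_le_one (n - 1) j hx0 hx1
        have hc : A = (n : ℝ) * (((n - 1).choose j : ℝ) * x ^ j * (1 - x) ^ ((n - 1) - j)) := by
          rw [hAdef, hexp]
          push_cast
          try simp only [Nat.add_sub_cancel]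
          linear_combination (x ^ j * (1 - x) ^ ((n - 1) - j)) * hidR
        rw [hc]
        calc (n : ℝ) * (((n - 1).choose j : ℝ) * x ^ j * (1 - x) ^ ((n - 1) - j))
            ≤ (n : ℝ) * 1 := mul_le_mul_of_nonneg_left hb (by positivity)
          _ = n := mul_one _
    have hB : B ≤ n := by
      have hidR : ((n - k : ℕ) : ℝ) * (n.choose k : ℝ)
          = (n : ℝ) * ((n - 1).choose k : ℝ) := by
        exact_mod_cast nat_idB n k (by omega)
      have hexp : n - k - 1 = (n - 1) - k := by omega
      have hb := bern_le_one (n - 1) k hx0 hx1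
      have hc : B = (n : ℝ) * (((n - 1).choose k : ℝ) * x ^ k * (1 - x) ^ ((n - 1) - k)) := by
        rw [hBdef, hexp]
        linear_combination (x ^ k * (1 - x) ^ ((n - 1) - k)) * hidR
      rw [hc]
      calc (n : ℝ) * (((n - 1).choose k : ℝ) * x ^ k * (1 - x) ^ ((n - 1) - k))
          ≤ (n : ℝ) * 1 := mul_le_mul_of_nonneg_left hb (by positivity)
        _ = n := mul_one _
    have heq : (n.choose k : ℝ) * ((k : ℝ) * x ^ (k - 1)) * (1 - x) ^ (n - k)
        + (n.choose k : ℝ) * x ^ k * (((n - k : ℕ) : ℝ) * (1 - x) ^ (n - k - 1) * (-1))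
        = A - B := by rw [hAdef, hBdef]; ring
    rw [heq, abs_sub_le_iff]
    constructor <;> linarith
  -- assemble
  have hterm : ∀ k ∈ Finset.range (n + 1),
      |((n.choose k : ℝ) * ((k : ℝ) * x ^ (k - 1)) * (1 - x) ^ (n - k)
        + (n.choose k : ℝ) * x ^ k * (((n - k : ℕ) : ℝ) * (1 - x) ^ (n - k - 1) * (-1))) * a k|
      ≤ 2 * n * ∫ u in ((k : ℝ) / (n + 1))..(((k : ℝ) + 1) / (n + 1)), |f u| := by
    intro k hk
    rw [abs_mul]
    exact mul_le_mul (hcoef k hk) (habs k) (abs_nonneg _) (by positivity)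
  calc |(n + 1 : ℝ) * ∑ k ∈ Finset.range (n + 1),
        ((n.choose k : ℝ) * ((k : ℝ) * x ^ (k - 1)) * (1 - x) ^ (n - k)
          + (n.choose k : ℝ) * x ^ k * (((n - k : ℕ) : ℝ) * (1 - x) ^ (n - k - 1) * (-1))) * a k|
      = ((n : ℝ) + 1) * |∑ k ∈ Finset.range (n + 1),
        ((n.choose k : ℝ) * ((k : ℝ) * x ^ (k - 1)) * (1 - x) ^ (n - k)
          + (n.choose k : ℝ) * x ^ k * (((n - k : ℕ) : ℝ) * (1 - x) ^ (n - k - 1) * (-1))) * a k| := by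
        rw [abs_mul, abs_of_nonneg hnpos.le]
    _ ≤ ((n : ℝ) + 1) * ∑ k ∈ Finset.range (n + 1),
        |((n.choose k : ℝ) * ((k : ℝ) * x ^ (k - 1)) * (1 - x) ^ (n - k)
          + (n.choose k : ℝ) * x ^ k * (((n - k : ℕ) : ℝ) * (1 - x) ^ (n - k - 1) * (-1))) * a k| :=
        mul_le_mul_of_nonneg_left (Finset.abs_sum_le_sum_abs _ _) hnpos.le
    _ ≤ ((n : ℝ) + 1) * ∑ k ∈ Finset.range (n + 1),
        2 * n * ∫ u in ((k : ℝ) / (n + 1))..(((k : ℝ) + 1) / (n + 1)), |f u| :=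
        mul_le_mul_of_nonneg_left (Finset.sum_le_sum hterm) hnpos.le
    _ = ((n : ℝ) + 1) * (2 * n * I) := by rw [← Finset.mul_sum, hsum]
    _ ≤ 4 * ((n : ℝ) ^ 2 + n) * I := by nlinarith [hIpos, (Nat.cast_nonneg n : (0:ℝ) ≤ n)]

end
end

section
/- For all f ∈ C([0,1]) and all t > 0: ω_1(f, t) ≤ (2 + 4(n³ + n²) t) ‖K_n f − f‖_∞; in particular, (1/6) ω_1(f, 1/(n³+n²)) ≤ ‖K_n f − f‖_∞. -/
noncomputable section

/-- The first modulus of continuity of `f` on `[0,1]` in the sup norm. -/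
def omega1 (f : ℝ → ℝ) (t : ℝ) : ℝ :=
  sSup {v : ℝ | ∃ x h : ℝ, 0 < h ∧ h ≤ t ∧ 0 ≤ x ∧ x + h ≤ 1 ∧ v = |f (x + h) - f x|}

namespace KAux

def a (n : ℕ) (f : ℝ → ℝ) (k : ℕ) : ℝ :=
  ∫ u in ((k : ℝ) / (n + 1))..((k + 1 : ℝ) / (n + 1)), f u

def D (n : ℕ) (f : ℝ → ℝ) (x : ℝ) : ℝ :=
  ((n : ℝ) + 1) * n * ∑ j ∈ Finset.range n,
    ((n-1).choose j : ℝ) * x ^ j * (1 - x) ^ (n - 1 - j) * (a n f (j+1) - a n f j)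

lemma kanto_eq (n : ℕ) (f : ℝ → ℝ) : kantorovichOp n f =
    fun x => ((n : ℝ) + 1) * ∑ k ∈ Finset.range (n + 1),
      (n.choose k : ℝ) * x ^ k * (1 - x) ^ (n - k) * a n f k := rfl

lemma kanto_hasDerivAt (n : ℕ) (hn : 1 ≤ n) (f : ℝ → ℝ) (x : ℝ) :
    HasDerivAt (kantorovichOp n f) (D n f x) x := by
  have h1 : ∀ k : ℕ, HasDerivAt
      (fun x : ℝ => (n.choose k : ℝ) * x ^ k * (1 - x) ^ (n - k) * a n f k)
      (((n.choose k : ℝ) * ((k : ℝ) * x ^ (k-1)) * (1 - x) ^ (n - k)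
        + (n.choose k : ℝ) * x ^ k * (((n - k : ℕ) : ℝ) * (1 - x) ^ (n - k - 1) * (-1)))
        * a n f k) x := by
    intro k
    have hp : HasDerivAt (fun x : ℝ => x ^ k) ((k : ℝ) * x ^ (k-1)) x := hasDerivAt_pow k x
    have hq : HasDerivAt (fun x : ℝ => (1 - x) ^ (n - k))
        (((n - k : ℕ) : ℝ) * (1 - x) ^ (n - k - 1) * (-1)) x := by
      have h0 : HasDerivAt (fun x : ℝ => 1 - x) (-1) x := by
        simpa using (hasDerivAt_id x).const_sub (1 : ℝ)
      exact (hasDerivAt_pow (n - k) (1 - x)).comp x h0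
    exact ((hp.const_mul _).mul hq).mul_const _
  have H : HasDerivAt (kantorovichOp n f)
      (((n : ℝ) + 1) * ∑ k ∈ Finset.range (n + 1),
        (((n.choose k : ℝ) * ((k : ℝ) * x ^ (k-1)) * (1 - x) ^ (n - k)
          + (n.choose k : ℝ) * x ^ k * (((n - k : ℕ) : ℝ) * (1 - x) ^ (n - k - 1) * (-1)))
          * a n f k)) x := by
    rw [kanto_eq]
    exact (HasDerivAt.fun_sum (fun k _ => h1 k)).const_mul _
  convert H using 1
  -- now the combinatorial identity
  have hn1 : n - 1 + 1 = n := by omega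
  have hA : ∑ k ∈ Finset.range (n + 1),
      (n.choose k : ℝ) * ((k : ℝ) * x ^ (k-1)) * (1 - x) ^ (n - k) * a n f k
      = ∑ j ∈ Finset.range n,
        (n : ℝ) * ((n-1).choose j : ℝ) * x ^ j * (1 - x) ^ (n - 1 - j) * a n f (j+1) := by
    rw [Finset.sum_range_succ']
    simp only [Nat.cast_zero, zero_mul, mul_zero, zero_add, add_zero]
    refine Finset.sum_congr rfl fun j hj => ?_
    have hc : (n : ℕ) * (n-1).choose j = n.choose (j+1) * (j+1) := by
      have := Nat.add_one_mul_choose_eq (n-1) j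
      simpa [hn1] using this
    have hcR : (n : ℝ) * ((n-1).choose j : ℝ) = (n.choose (j+1) : ℝ) * ((j : ℝ) + 1) := by
      exact_mod_cast hc
    have he : n - (j + 1) = n - 1 - j := by omega
    have he2 : j + 1 - 1 = j := by omega
    rw [he, he2]
    push_cast
    linear_combination (-(x ^ j * (1 - x) ^ (n - 1 - j) * a n f (j+1))) * hcR
  have hB : ∑ k ∈ Finset.range (n + 1),
      (n.choose k : ℝ) * x ^ k * (((n - k : ℕ) : ℝ) * (1 - x) ^ (n - k - 1) * (-1)) * a n f k
      = ∑ j ∈ Finset.range n,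
        -((n : ℝ) * ((n-1).choose j : ℝ) * x ^ j * (1 - x) ^ (n - 1 - j) * a n f j) := by
    rw [Finset.sum_range_succ]
    simp only [Nat.sub_self, Nat.cast_zero, zero_mul, mul_zero, add_zero, neg_mul, mul_neg,
      neg_zero]
    refine Finset.sum_congr rfl fun j hj => ?_
    have hjn : j < n := Finset.mem_range.mp hj
    have hc : (n : ℕ) * (n-1).choose j = n.choose j * (n - j) := by
      rw [← Nat.choose_succ_right_eq]
      have := Nat.add_one_mul_choose_eq (n-1) j
      simpa [hn1] using this
    have hcR : (n : ℝ) * ((n-1).choose j : ℝ) = (n.choose j : ℝ) * ((n - j : ℕ) : ℝ) := by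
      exact_mod_cast hc
    have he : n - j - 1 = n - 1 - j := by omega
    rw [he]
    linear_combination (x ^ j * (1 - x) ^ (n - 1 - j) * a n f j) * hcR
  have hD : D n f x = ((n : ℝ) + 1) * ∑ j ∈ Finset.range n,
      ((n : ℝ) * ((n-1).choose j : ℝ) * x ^ j * (1 - x) ^ (n - 1 - j) * a n f (j+1)
       - (n : ℝ) * ((n-1).choose j : ℝ) * x ^ j * (1 - x) ^ (n - 1 - j) * a n f j) := by
    unfold D
    rw [Finset.mul_sum, Finset.mul_sum]
    exact Finset.sum_congr rfl fun j _ => by ring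
  rw [hD]
  simp only [add_mul]
  rw [Finset.sum_add_distrib, hA, hB, Finset.sum_sub_distrib, Finset.sum_neg_distrib]
  ring

lemma omega_bddAbove (f : ℝ → ℝ) (hf : Continuous f) (t : ℝ) :
    BddAbove {v : ℝ | ∃ x h : ℝ, 0 < h ∧ h ≤ t ∧ 0 ≤ x ∧ x + h ≤ 1 ∧ v = |f (x + h) - f x|} := by
  obtain ⟨M, hM⟩ := isCompact_Icc.exists_bound_of_continuousOn
    (hf.continuousOn (s := Set.Icc (0:ℝ) 1))
  refine ⟨M + M, ?_⟩
  rintro v ⟨x, h, h0, hht, hx, hxh, rfl⟩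
  have h1 : x ∈ Set.Icc (0:ℝ) 1 := ⟨hx, by linarith⟩
  have h2 : x + h ∈ Set.Icc (0:ℝ) 1 := ⟨by linarith, hxh⟩
  have ha := abs_le.mp (by simpa [Real.norm_eq_abs] using hM _ h2)
  have hb := abs_le.mp (by simpa [Real.norm_eq_abs] using hM _ h1)
  rw [abs_le]
  constructor <;> linarith [ha.1, ha.2, hb.1, hb.2]

lemma omega_nonempty (f : ℝ → ℝ) (t : ℝ) (ht : 0 < t) :
    Set.Nonempty {v : ℝ | ∃ x h : ℝ, 0 < h ∧ h ≤ t ∧ 0 ≤ x ∧ x + h ≤ 1 ∧ v = |f (x + h) - f x|} :=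
  ⟨|f (0 + min t 1) - f 0|, 0, min t 1, lt_min ht one_pos, min_le_left _ _, le_refl 0,
    by rw [zero_add]; exact min_le_right t 1, rfl⟩

lemma omega1_nonneg (f : ℝ → ℝ) (hf : Continuous f) (t : ℝ) (ht : 0 < t) :
    0 ≤ omega1 f t := by
  unfold omega1
  refine (abs_nonneg (f (0 + min t 1) - f 0)).trans (le_csSup (omega_bddAbove f hf t) ?_)
  exact ⟨0, min t 1, lt_min ht one_pos, min_le_left _ _, le_refl 0,
    by rw [zero_add]; exact min_le_right t 1, rfl⟩

lemma abs_a_diff_le (n : ℕ) (f : ℝ → ℝ) (hf : Continuous f) (j : ℕ) (hj : j < n) :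
    |a n f (j+1) - a n f j| ≤ omega1 f (1/((n:ℝ)+1)) * (1/((n:ℝ)+1)) := by
  have hNpos : (0:ℝ) < (n:ℝ) + 1 := by positivity
  set N : ℝ := (n:ℝ) + 1 with hN
  have hint1 : IntervalIntegrable (fun u => f (u + 1/N)) MeasureTheory.volume
      ((j:ℝ)/N) (((j:ℝ)+1)/N) :=
    (hf.comp (continuous_id.add continuous_const)).intervalIntegrable _ _
  have hint2 : IntervalIntegrable f MeasureTheory.volume ((j:ℝ)/N) (((j:ℝ)+1)/N) :=
    hf.intervalIntegrable _ _
  have hshift : a n f (j+1) = ∫ u in ((j:ℝ)/N)..(((j:ℝ)+1)/N), f (u + 1/N) := by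
    rw [intervalIntegral.integral_comp_add_right]
    unfold a
    congr 1 <;> push_cast <;> ring
  have hsub : a n f (j+1) - a n f j
      = ∫ u in ((j:ℝ)/N)..(((j:ℝ)+1)/N), (f (u + 1/N) - f u) := by
    rw [intervalIntegral.integral_sub hint1 hint2, ← hshift]
    rfl
  have hle : ((j:ℝ)/N) ≤ (((j:ℝ)+1)/N) := by
    apply (div_le_div_iff_of_pos_right hNpos).mpr; linarith
  have hW : ∀ u ∈ Set.uIoc ((j:ℝ)/N) (((j:ℝ)+1)/N), ‖f (u + 1/N) - f u‖ ≤ omega1 f (1/N) := by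
    intro u hu
    rw [Set.uIoc_of_le hle] at hu
    have hu0 : 0 ≤ u := le_of_lt (lt_of_le_of_lt (div_nonneg (Nat.cast_nonneg j) hNpos.le) hu.1)
    have hj2 : ((j:ℝ) + 2) ≤ N := by
      rw [hN]
      have : (j:ℝ) + 1 ≤ (n:ℝ) := by exact_mod_cast hj
      linarith
    have hub : u + 1/N ≤ 1 := by
      have hEq : ((j:ℝ)+1)/N + 1/N = ((j:ℝ)+2)/N := by ring
      have h2 : ((j:ℝ)+2)/N ≤ 1 := by rw [div_le_one hNpos]; exact hj2
      linarith [hu.2]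
    rw [Real.norm_eq_abs]
    exact le_csSup (omega_bddAbove f hf (1/N))
      ⟨u, 1/N, by positivity, le_refl _, hu0, hub, rfl⟩
  have hnorm := intervalIntegral.norm_integral_le_of_norm_le_const hW
  rw [← hsub] at hnorm
  have habs : |((j:ℝ)+1)/N - (j:ℝ)/N| = 1/N := by
    rw [show ((j:ℝ)+1)/N - (j:ℝ)/N = 1/N by ring]
    exact abs_of_pos (by positivity)
  rw [Real.norm_eq_abs, habs] at hnorm
  exact hnorm

lemma kanto_continuous (n : ℕ) (f : ℝ → ℝ) : Continuous (kantorovichOp n f) := by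
  rw [kanto_eq]
  exact continuous_const.mul (continuous_finset_sum _ fun k _ =>
    ((continuous_const.mul (continuous_pow k)).mul
      ((continuous_const.sub continuous_id).pow _)).mul continuous_const)

lemma D_bound (n : ℕ) (hn : 1 ≤ n) (f : ℝ → ℝ) (hf : Continuous f) {x : ℝ}
    (hx : x ∈ Set.Icc (0:ℝ) 1) :
    |D n f x| ≤ (n:ℝ) * omega1 f (1/((n:ℝ)+1)) := by
  have hx0 : 0 ≤ x := hx.1
  have hx1 : 0 ≤ 1 - x := by linarith [hx.2]
  set W := omega1 f (1/((n:ℝ)+1)) with hWdef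
  have hW0 : 0 ≤ W := omega1_nonneg f hf _ (by positivity)
  have hn1 : n - 1 + 1 = n := by omega
  have hsum1 : ∑ j ∈ Finset.range n, ((n-1).choose j : ℝ) * x ^ j * (1-x) ^ (n-1-j) = 1 := by
    have h := add_pow x (1-x) (n-1)
    rw [hn1, show x + (1-x) = 1 by ring, one_pow] at h
    calc ∑ j ∈ Finset.range n, ((n-1).choose j : ℝ) * x ^ j * (1-x) ^ (n-1-j)
        = ∑ j ∈ Finset.range n, x ^ j * (1-x) ^ (n-1-j) * ((n-1).choose j : ℝ) :=
          Finset.sum_congr rfl fun j _ => by ring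
      _ = 1 := h.symm
  have hterm : ∀ j ∈ Finset.range n,
      |((n-1).choose j : ℝ) * x ^ j * (1-x) ^ (n-1-j) * (a n f (j+1) - a n f j)|
      ≤ ((n-1).choose j : ℝ) * x ^ j * (1-x) ^ (n-1-j) * (W * (1/((n:ℝ)+1))) := by
    intro j hj
    rw [abs_mul]
    have hnn : 0 ≤ ((n-1).choose j : ℝ) * x ^ j * (1-x) ^ (n-1-j) :=
      mul_nonneg (mul_nonneg (Nat.cast_nonneg _) (pow_nonneg hx0 _)) (pow_nonneg hx1 _)
    rw [abs_of_nonneg hnn]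
    exact mul_le_mul_of_nonneg_left (abs_a_diff_le n f hf j (Finset.mem_range.mp hj)) hnn
  have hne : ((n:ℝ)+1) ≠ 0 := by positivity
  calc |D n f x|
      ≤ (((n:ℝ)+1) * (n:ℝ)) * ∑ j ∈ Finset.range n,
          |((n-1).choose j : ℝ) * x ^ j * (1-x) ^ (n-1-j) * (a n f (j+1) - a n f j)| := by
        unfold D
        rw [abs_mul, abs_of_nonneg (show (0:ℝ) ≤ ((n:ℝ)+1) * (n:ℝ) by positivity)]
        exact mul_le_mul_of_nonneg_left (Finset.abs_sum_le_sum_abs _ _) (by positivity)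
    _ ≤ (((n:ℝ)+1) * (n:ℝ)) * ∑ j ∈ Finset.range n,
          ((n-1).choose j : ℝ) * x ^ j * (1-x) ^ (n-1-j) * (W * (1/((n:ℝ)+1))) :=
        mul_le_mul_of_nonneg_left (Finset.sum_le_sum hterm) (by positivity)
    _ = (((n:ℝ)+1) * (n:ℝ)) * ((∑ j ∈ Finset.range n,
          ((n-1).choose j : ℝ) * x ^ j * (1-x) ^ (n-1-j)) * (W * (1/((n:ℝ)+1)))) := by
        rw [← Finset.sum_mul]
    _ = (n:ℝ) * W := by rw [hsum1]; field_simp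

lemma kanto_lip (n : ℕ) (hn : 1 ≤ n) (f : ℝ → ℝ) (hf : Continuous f) {x y : ℝ}
    (hx : x ∈ Set.Icc (0:ℝ) 1) (hy : y ∈ Set.Icc (0:ℝ) 1) :
    |kantorovichOp n f y - kantorovichOp n f x|
      ≤ ((n:ℝ) * omega1 f (1/((n:ℝ)+1))) * |y - x| := by
  have := Convex.norm_image_sub_le_of_norm_hasDerivWithin_le (f' := D n f)
    (fun z _ => (kanto_hasDerivAt n hn f z).hasDerivWithinAt)
    (fun z hz => by rw [Real.norm_eq_abs]; exact D_bound n hn f hf hz)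
    (convex_Icc 0 1) hx hy
  simpa [Real.norm_eq_abs] using this

lemma key (n : ℕ) (hn : 1 ≤ n) (f : ℝ → ℝ) (hf : Continuous f) (t : ℝ) (ht : 0 < t) :
    omega1 f t ≤ 2 * supNorm (fun x => kantorovichOp n f x - f x)
      + t * ((n:ℝ) * omega1 f (1/((n:ℝ)+1))) := by
  set g := kantorovichOp n f with hg
  set E := supNorm (fun x => g x - f x) with hE
  have hbdd : BddAbove ((fun x => |g x - f x|) '' Set.Icc (0:ℝ) 1) :=
    isCompact_Icc.bddAbove_image ((kanto_continuous n f).sub hf).abs.continuousOn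
  have hEle : ∀ y ∈ Set.Icc (0:ℝ) 1, |g y - f y| ≤ E := fun y hy => le_csSup hbdd ⟨y, hy, rfl⟩
  set W := omega1 f (1/((n:ℝ)+1)) with hW
  have hW0 : 0 ≤ (n:ℝ) * W :=
    mul_nonneg (Nat.cast_nonneg n) (omega1_nonneg f hf _ (by positivity))
  unfold omega1
  apply csSup_le (omega_nonempty f t ht)
  rintro v ⟨x, h, h0, hht, hx0, hxh, rfl⟩
  have hxI : x ∈ Set.Icc (0:ℝ) 1 := ⟨hx0, by linarith⟩
  have hxhI : x + h ∈ Set.Icc (0:ℝ) 1 := ⟨by linarith, hxh⟩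
  have l1 := hEle _ hxhI
  have l2 := hEle _ hxI
  have l3 := kanto_lip n hn f hf hxI hxhI
  have habs : |f (x+h) - f x| ≤ |g (x+h) - f (x+h)| + |g (x+h) - g x| + |g x - f x| :=
    calc |f (x+h) - f x|
        = |(-(g (x+h) - f (x+h))) + (g (x+h) - g x) + (g x - f x)| := by ring_nf
      _ ≤ |(-(g (x+h) - f (x+h)))| + |g (x+h) - g x| + |g x - f x| := abs_add_three _ _ _
      _ = |g (x+h) - f (x+h)| + |g (x+h) - g x| + |g x - f x| := by rw [abs_neg]
  have l3' : |g (x+h) - g x| ≤ ((n:ℝ) * W) * h := by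
    have hxx : |x + h - x| = h := by
      rw [show x + h - x = h by ring]; exact abs_of_pos h0
    calc |g (x+h) - g x| ≤ ((n:ℝ) * W) * |x + h - x| := l3
      _ = ((n:ℝ) * W) * h := by rw [hxx]
  have l4 : ((n:ℝ) * W) * h ≤ ((n:ℝ) * W) * t := mul_le_mul_of_nonneg_left hht hW0
  have := le_trans habs (by linarith : |g (x+h) - f (x+h)| + |g (x+h) - g x| + |g x - f x|
    ≤ 2 * E + t * ((n:ℝ) * W))
  linarith [this]

end KAux

/-- **Lower estimate for the Kantorovič operator.**
For all `f ∈ C([0,1])` and `t > 0`: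
`ω₁(f,t) ≤ (2 + 4 (n³ + n²) t) ‖K_n f − f‖_∞`; in particular
`(1/6) ω₁(f, 1/(n³+n²)) ≤ ‖K_n f − f‖_∞`. -/


theorem kantorovich_lower_estimate (n : ℕ) (hn : 2 ≤ n) (f : ℝ → ℝ) (hf : Continuous f)
    (t : ℝ) (ht : 0 < t) :
    omega1 f t ≤ (2 + 4 * ((n : ℝ) ^ 3 + (n : ℝ) ^ 2) * t) *
        supNorm (fun x => kantorovichOp n f x - f x) ∧
      (1 / 6) * omega1 f (1 / ((n : ℝ) ^ 3 + (n : ℝ) ^ 2)) ≤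
        supNorm (fun x => kantorovichOp n f x - f x) := by
  have hn1 : 1 ≤ n := by omega
  have hn2 : (2:ℝ) ≤ (n:ℝ) := by exact_mod_cast hn
  have hnpos : (0:ℝ) < (n:ℝ) := by linarith
  set E := supNorm (fun x => kantorovichOp n f x - f x) with hE
  have hbdd : BddAbove ((fun x => |kantorovichOp n f x - f x|) '' Set.Icc (0:ℝ) 1) :=
    isCompact_Icc.bddAbove_image ((KAux.kanto_continuous n f).sub hf).abs.continuousOn
  have hE0 : 0 ≤ E :=
    (abs_nonneg _).trans (le_csSup hbdd ⟨0, ⟨le_refl _, zero_le_one⟩, rfl⟩)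
  set W := omega1 f (1/((n:ℝ)+1)) with hW
  have hW0 : 0 ≤ W := KAux.omega1_nonneg f hf _ (by positivity)
  have hb : W ≤ 2*((n:ℝ)+1)*E := by
    have h1 := KAux.key n hn1 f hf (1/((n:ℝ)+1)) (by positivity)
    rw [← hE, ← hW] at h1
    have hmul := mul_le_mul_of_nonneg_left h1 (show (0:ℝ) ≤ (n:ℝ)+1 by positivity)
    have hrw : ((n:ℝ)+1)*(2*E + (1/((n:ℝ)+1))*((n:ℝ)*W)) = 2*((n:ℝ)+1)*E + (n:ℝ)*W := by
      field_simp
    rw [hrw] at hmul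
    nlinarith [hmul]
  constructor
  · have k1 := KAux.key n hn1 f hf t ht
    rw [← hE, ← hW] at k1
    have k2 : t*((n:ℝ)*W) ≤ t*((n:ℝ)*(2*((n:ℝ)+1)*E)) :=
      mul_le_mul_of_nonneg_left (mul_le_mul_of_nonneg_left hb (Nat.cast_nonneg n)) ht.le
    have hc : (n:ℝ)*(2*((n:ℝ)+1)) ≤ 4*((n:ℝ)^3 + (n:ℝ)^2) := by
      nlinarith [hn2, sq_nonneg ((n:ℝ)), mul_nonneg (mul_nonneg hnpos.le hnpos.le) hnpos.le]
    have k3 := mul_le_mul_of_nonneg_right hc (mul_nonneg ht.le hE0)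
    nlinarith [k1, k2, k3]
  · set t0 := 1/((n:ℝ)^3+(n:ℝ)^2) with ht0def
    have hden : (0:ℝ) < (n:ℝ)^3+(n:ℝ)^2 := by nlinarith
    have ht0 : 0 < t0 := by rw [ht0def]; exact one_div_pos.mpr hden
    have k1 := KAux.key n hn1 f hf t0 ht0
    rw [← hE, ← hW] at k1
    have heq : t0*((n:ℝ)*(2*((n:ℝ)+1)*E)) = 2*E/(n:ℝ) := by
      rw [ht0def]
      field_simp
    have k2 : t0*((n:ℝ)*W) ≤ 2*E/(n:ℝ) := by
      rw [← heq]
      exact mul_le_mul_of_nonneg_left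
        (mul_le_mul_of_nonneg_left hb (Nat.cast_nonneg n)) ht0.le
    have hquot : 2*E/(n:ℝ) ≤ E := by
      rw [div_le_iff₀ hnpos]
      nlinarith [hE0, hn2]
    linarith [k1, k2, hquot, hE0]

end
end
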